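/- arXiv:2207.10272 — 3 statements merged into one kernel-verified Lean document; each statement's English description precedes it below -/
import Mathlib

section
/- For every real k ≥ 4 there exists a constant C_k > 0 such that for all v, v* ∈ ℝ³ and all σ ∈ S²: (i) |⟨v'⟩^k − sin^k(θ/2) ⟨v*⟩^k| ≤ C_k sin²(θ/2) ⟨v*⟩^{k−1} ⟨v⟩ + C_k ⟨v⟩^k, and (ii) |⟨v'⟩^k − cos^k(θ/2) ⟨v⟩^k| ≤ C_k ⟨v*⟩^k ⟨v⟩^{k−1}. -/
open MeasureTheory Real
open scoped ENNReal RealInnerProductSpace Classical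

noncomputable section

/-- velocity space ℝ³ -/
abbrev E3 : Type := EuclideanSpace ℝ (Fin 3)

/-- the unit sphere 𝕊² ⊆ ℝ³ -/
abbrev S2 : Type := Metric.sphere (0 : E3) 1

/-- surface measure on the unit sphere -/
noncomputable instance : MeasureSpace S2 := ⟨(volume : Measure E3).toSphere⟩

/-- Japanese bracket ⟨v⟩ = √(1+|v|²). -/
def jap (v : E3) : ℝ := Real.sqrt (1 + ‖v‖ ^ 2)

/-- Post-collision velocity v' = (v+v*)/2 + (|v-v*|/2)σ. -/
def vP (v w : E3) (σ : S2) : E3 := (2⁻¹ : ℝ) • (v + w) + (‖v - w‖ / 2) • (σ : E3)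

/-- Post-collision velocity v*' = (v+v*)/2 - (|v-v*|/2)σ. -/
def vsP (v w : E3) (σ : S2) : E3 := (2⁻¹ : ℝ) • (v + w) - (‖v - w‖ / 2) • (σ : E3)

/-- cos θ = ((v-v*)/|v-v*|)·σ. -/
def cosTheta (v w : E3) (σ : S2) : ℝ := ⟪v - w, (σ : E3)⟫ / ‖v - w‖

/-- sin(θ/2) = √((1-cos θ)/2). -/
def sinHalf (v w : E3) (σ : S2) : ℝ := Real.sqrt ((1 - cosTheta v w σ) / 2)

/-- cos(θ/2) = √((1+cos θ)/2). -/
def cosHalf (v w : E3) (σ : S2) : ℝ := Real.sqrt ((1 + cosTheta v w σ) / 2)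

/-- a fixed reference unit direction, used to express rotation-invariant angular integrals -/
def e1 : E3 := EuclideanSpace.single 0 1

/-- cos θ for the deviation angle of σ relative to the fixed direction `e1` -/
def cos1 (σ : S2) : ℝ := ⟪e1, (σ : E3)⟫

def sinHalf1 (σ : S2) : ℝ := Real.sqrt ((1 - cos1 σ) / 2)

def cosHalf1 (σ : S2) : ℝ := Real.sqrt ((1 + cos1 σ) / 2)

/-- the standard Maxwellian μ(v) = (2π)^{-3/2} e^{-|v|²/2} -/
def maxw (v : E3) : ℝ := (2 * π) ^ (-(3 : ℝ) / 2) * Real.exp (-‖v‖ ^ 2 / 2)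

/-- Grad's angular cutoff assumption (A2): `bf` is measurable, nonnegative,
`K ≤ bf ≤ K⁻¹` on `[0,1]` for some `K > 0`, and `bf` vanishes on negatives. -/
def gradCutoff (bf : ℝ → ℝ) : Prop :=
  Measurable bf ∧ (∀ t, 0 ≤ bf t) ∧
    (∃ K : ℝ, 0 < K ∧ ∀ t ∈ Set.Icc (0 : ℝ) 1, K ≤ bf t ∧ bf t ≤ K⁻¹) ∧
    ∀ t : ℝ, t < 0 → bf t = 0

/-- gain operator Q⁺ -/
def Qgain (γ : ℝ) (bf : ℝ → ℝ) (f g : E3 → ℝ) (v : E3) : ℝ :=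
  ∫ w : E3, ∫ σ : S2, ‖v - w‖ ^ γ * bf (cosTheta v w σ) * (f (vsP v w σ) * g (vP v w σ))

/-- loss operator Q⁻ -/
def Qloss (γ : ℝ) (bf : ℝ → ℝ) (f g : E3 → ℝ) (v : E3) : ℝ :=
  ∫ w : E3, ∫ σ : S2, ‖v - w‖ ^ γ * bf (cosTheta v w σ) * (f w * g v)

/-- the Boltzmann collision operator Q = Q⁺ - Q⁻ -/
def Qcol (γ : ℝ) (bf : ℝ → ℝ) (f g : E3 → ℝ) (v : E3) : ℝ :=
  ∫ w : E3, ∫ σ : S2, ‖v - w‖ ^ γ * bf (cosTheta v w σ) *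
    (f (vsP v w σ) * g (vP v w σ) - f w * g v)

/-- collision frequency ν(v) -/
def nuF (γ : ℝ) (bf : ℝ → ℝ) (v : E3) : ℝ :=
  ∫ w : E3, ∫ σ : S2, ‖v - w‖ ^ γ * bf (cosTheta v w σ) * maxw w

/-- squared weighted norm ‖f‖²_{L²_q} -/
def wSqR (q : ℝ) (f : E3 → ℝ) : ℝ := ∫ v : E3, f v ^ 2 * jap v ^ (2 * q)

/-- weighted norm ‖f‖_{L²_q} -/
def wNorm (q : ℝ) (f : E3 → ℝ) : ℝ := Real.sqrt (wSqR q f)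

/-- squared star norm ‖f‖²_{L²_{k+γ/2,*}} = ∫∫ μ(v*)|v-v*|^γ f(v)² ⟨v⟩^{2k} -/
def starSq (γ k : ℝ) (f : E3 → ℝ) : ℝ :=
  ∫ v : E3, ∫ w : E3, maxw w * ‖v - w‖ ^ γ * f v ^ 2 * jap v ^ (2 * k)

/-- star norm ‖f‖_{L²_{k+γ/2,*}} -/
def starNorm (γ k : ℝ) (f : E3 → ℝ) : ℝ := Real.sqrt (starSq γ k f)

/-- squared exponentially weighted norm ‖f‖²_{L²_{q,a,b}} -/
def expSq (q a b : ℝ) (f : E3 → ℝ) : ℝ :=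
  ∫ v : E3, f v ^ 2 * jap v ^ (2 * q) * Real.exp (2 * a * jap v ^ b)

/-- exponentially weighted norm ‖f‖_{L²_{q,a,b}} -/
def expNorm (q a b : ℝ) (f : E3 → ℝ) : ℝ := Real.sqrt (expSq q a b f)


/-! ### Auxiliary lemmas -/

lemma jap_pos' (v : E3) : 0 < jap v := Real.sqrt_pos.2 (by positivity)

lemma one_le_jap' (v : E3) : 1 ≤ jap v := by
  have h := Real.sqrt_le_sqrt (show (1:ℝ) ≤ 1 + ‖v‖ ^ 2 by nlinarith [sq_nonneg ‖v‖])
  simp only [Real.sqrt_one] at h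
  exact h

lemma norm_le_jap' (v : E3) : ‖v‖ ≤ jap v := by
  have h : ‖v‖ = Real.sqrt (‖v‖ ^ 2) := (Real.sqrt_sq (norm_nonneg v)).symm
  rw [h, jap]
  exact Real.sqrt_le_sqrt (by linarith)

lemma jap_le_one_add' (v : E3) : jap v ≤ 1 + ‖v‖ := by
  have h : 1 + ‖v‖ ^ 2 ≤ (1 + ‖v‖) ^ 2 := by nlinarith [norm_nonneg v]
  calc jap v ≤ Real.sqrt ((1 + ‖v‖) ^ 2) := Real.sqrt_le_sqrt h
    _ = 1 + ‖v‖ := Real.sqrt_sq (by positivity)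

lemma norm_sigma' (σ : S2) : ‖(σ : E3)‖ = 1 := by
  have h := σ.2
  rwa [mem_sphere_zero_iff_norm] at h

lemma cosTheta_mul_norm (v w : E3) (σ : S2) :
    cosTheta v w σ * ‖v - w‖ = ⟪v - w, (σ : E3)⟫ := by
  rcases eq_or_ne (‖v - w‖) 0 with h | h
  · have h0 : v - w = 0 := by simpa using norm_eq_zero.mp h
    simp [h, h0]
  · rw [cosTheta]; field_simp

lemma abs_cosTheta_le' (v w : E3) (σ : S2) : |cosTheta v w σ| ≤ 1 := by
  rcases eq_or_ne (‖v - w‖) 0 with h | h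
  · simp [cosTheta, h]
  · have hpos : 0 < ‖v - w‖ := lt_of_le_of_ne (norm_nonneg _) (Ne.symm h)
    rw [cosTheta, abs_div, abs_of_nonneg (norm_nonneg _), div_le_one hpos]
    calc |⟪v - w, (σ : E3)⟫| ≤ ‖v - w‖ * ‖(σ : E3)‖ := abs_real_inner_le_norm _ _
      _ = ‖v - w‖ := by rw [norm_sigma']; ring

lemma sinHalf_sq' (v w : E3) (σ : S2) : sinHalf v w σ ^ 2 = (1 - cosTheta v w σ) / 2 := by
  have h := abs_cosTheta_le' v w σ
  rw [abs_le] at h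
  exact Real.sq_sqrt (by linarith)

lemma cosHalf_sq' (v w : E3) (σ : S2) : cosHalf v w σ ^ 2 = (1 + cosTheta v w σ) / 2 := by
  have h := abs_cosTheta_le' v w σ
  rw [abs_le] at h
  exact Real.sq_sqrt (by linarith)

lemma sinHalf_nonneg' (v w : E3) (σ : S2) : 0 ≤ sinHalf v w σ := Real.sqrt_nonneg _

lemma cosHalf_nonneg' (v w : E3) (σ : S2) : 0 ≤ cosHalf v w σ := Real.sqrt_nonneg _

lemma sinHalf_le_one' (v w : E3) (σ : S2) : sinHalf v w σ ≤ 1 := by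
  have h := abs_cosTheta_le' v w σ
  rw [abs_le] at h
  rw [sinHalf]
  exact Real.sqrt_le_one.2 (by linarith)

lemma cosHalf_le_one' (v w : E3) (σ : S2) : cosHalf v w σ ≤ 1 := by
  have h := abs_cosTheta_le' v w σ
  rw [abs_le] at h
  rw [cosHalf]
  exact Real.sqrt_le_one.2 (by linarith)

lemma norm_vP_sub_v (v w : E3) (σ : S2) :
    ‖vP v w σ - v‖ = sinHalf v w σ * ‖v - w‖ := by
  have hdecomp : vP v w σ - v = (‖v - w‖ / 2) • (σ : E3) - (2⁻¹ : ℝ) • (v - w) := by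
    rw [vP]; module
  have hkey : ‖vP v w σ - v‖ ^ 2 = (sinHalf v w σ * ‖v - w‖) ^ 2 := by
    rw [hdecomp, norm_sub_sq_real, norm_smul, norm_smul, real_inner_smul_left,
      real_inner_smul_right, real_inner_comm, ← cosTheta_mul_norm v w σ]
    rw [mul_pow, mul_pow, Real.norm_eq_abs, Real.norm_eq_abs,
      abs_of_nonneg (by positivity : (0:ℝ) ≤ ‖v - w‖ / 2),
      abs_of_nonneg (by norm_num : (0:ℝ) ≤ (2⁻¹ : ℝ)), norm_sigma']
    rw [mul_pow, sinHalf_sq']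
    ring
  have h1 : 0 ≤ ‖vP v w σ - v‖ := norm_nonneg _
  have h2 : 0 ≤ sinHalf v w σ * ‖v - w‖ := by
    exact mul_nonneg (sinHalf_nonneg' v w σ) (norm_nonneg _)
  nlinarith [hkey, h1, h2]

lemma norm_vP_sub_w (v w : E3) (σ : S2) :
    ‖vP v w σ - w‖ = cosHalf v w σ * ‖v - w‖ := by
  have hdecomp : vP v w σ - w = (‖v - w‖ / 2) • (σ : E3) + (2⁻¹ : ℝ) • (v - w) := by
    rw [vP]; module
  have hkey : ‖vP v w σ - w‖ ^ 2 = (cosHalf v w σ * ‖v - w‖) ^ 2 := by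
    rw [hdecomp, norm_add_sq_real, norm_smul, norm_smul, real_inner_smul_left,
      real_inner_smul_right, real_inner_comm, ← cosTheta_mul_norm v w σ]
    rw [mul_pow, mul_pow, Real.norm_eq_abs, Real.norm_eq_abs,
      abs_of_nonneg (by positivity : (0:ℝ) ≤ ‖v - w‖ / 2),
      abs_of_nonneg (by norm_num : (0:ℝ) ≤ (2⁻¹ : ℝ)), norm_sigma']
    rw [mul_pow, cosHalf_sq']
    ring
  have h1 : 0 ≤ ‖vP v w σ - w‖ := norm_nonneg _
  have h2 : 0 ≤ cosHalf v w σ * ‖v - w‖ :=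
    mul_nonneg (cosHalf_nonneg' v w σ) (norm_nonneg _)
  nlinarith [hkey, h1, h2]

/-- Mean value type inequality for rpow. -/
lemma rpow_sub_rpow_le_mvt {k x y M : ℝ} (hk : 1 ≤ k) (hy : 0 ≤ y) (hyx : y ≤ x)
    (hM : x ≤ M) : x ^ k - y ^ k ≤ k * M ^ (k - 1) * (x - y) := by
  have hx0 : 0 ≤ x := le_trans hy hyx
  rcases eq_or_lt_of_le hx0 with h0 | h0
  · have hy0 : y = 0 := le_antisymm (h0 ▸ hyx) hy
    rw [← h0, hy0]; simp
  · set t := y / x with ht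
    have ht0 : 0 ≤ t := div_nonneg hy hx0
    have ht1 : t ≤ 1 := (div_le_one h0).2 hyx
    have hb : 1 + k * (t - 1) ≤ t ^ k := by
      have hB := one_add_mul_self_le_rpow_one_add (s := t - 1) (by linarith) hk
      have : 1 + (t - 1) = t := by ring
      rwa [this] at hB
    have hyx' : y = t * x := by rw [ht, div_mul_cancel₀ _ (ne_of_gt h0)]
    have htx : y ^ k = t ^ k * x ^ k := by
      rw [hyx', Real.mul_rpow ht0 hx0]
    have hxk : 0 ≤ x ^ k := Real.rpow_nonneg hx0 k
    have h1 : x ^ k - y ^ k ≤ x ^ k * (k * (1 - t)) := by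
      rw [htx]; nlinarith [hb, hxk]
    have hxx : x ^ k = x ^ (k - 1) * x := by
      have h := Real.rpow_add_one (ne_of_gt h0) (k - 1)
      rw [sub_add_cancel] at h
      exact h
    have hxM : x ^ (k - 1) ≤ M ^ (k - 1) :=
      Real.rpow_le_rpow hx0 hM (by linarith)
    have hxy0 : 0 ≤ x - y := by linarith
    calc x ^ k - y ^ k ≤ x ^ k * (k * (1 - t)) := h1
      _ = k * x ^ (k - 1) * (x - y) := by rw [hxx, hyx']; ring
      _ ≤ k * M ^ (k - 1) * (x - y) := by
          have hk0 : (0:ℝ) ≤ k := by linarith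
          have := mul_le_mul_of_nonneg_right (mul_le_mul_of_nonneg_left hxM hk0) hxy0
          linarith [this]

lemma abs_rpow_sub_rpow {k x y M : ℝ} (hk : 1 ≤ k) (hx : 0 ≤ x) (hy : 0 ≤ y)
    (hxM : x ≤ M) (hyM : y ≤ M) : |x ^ k - y ^ k| ≤ k * M ^ (k - 1) * |x - y| := by
  rcases le_total y x with h | h
  · have h1 : y ^ k ≤ x ^ k := Real.rpow_le_rpow hy h (by linarith)
    rw [abs_of_nonneg (by linarith), abs_of_nonneg (by linarith)]
    exact rpow_sub_rpow_le_mvt hk hy h hxM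
  · have h1 : x ^ k ≤ y ^ k := Real.rpow_le_rpow hx h (by linarith)
    rw [abs_of_nonpos (by linarith), abs_of_nonpos (by linarith)]
    have := rpow_sub_rpow_le_mvt hk hx h hyM
    linarith

lemma add_rpow_le_two_rpow {p q r : ℝ} (hp : 0 ≤ p) (hq : 0 ≤ q) (hr : 0 ≤ r) :
    (p + q) ^ r ≤ 2 ^ r * (p ^ r + q ^ r) := by
  have hmax0 : 0 ≤ max p q := le_trans hp (le_max_left _ _)
  have hmax : p + q ≤ 2 * max p q := by
    rcases le_total p q with h | h
    · rw [max_eq_right h]; linarith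
    · rw [max_eq_left h]; linarith
  calc (p + q) ^ r ≤ (2 * max p q) ^ r :=
        Real.rpow_le_rpow (by linarith) hmax hr
    _ = 2 ^ r * (max p q) ^ r := Real.mul_rpow (by norm_num) hmax0
    _ ≤ 2 ^ r * (p ^ r + q ^ r) := by
        have hm : (max p q) ^ r ≤ p ^ r + q ^ r := by
          rcases le_total p q with h | h
          · rw [max_eq_right h]; linarith [Real.rpow_nonneg hp r]
          · rw [max_eq_left h]; linarith [Real.rpow_nonneg hq r]
        have h2 : (0:ℝ) ≤ 2 ^ r := Real.rpow_nonneg (by norm_num) r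
        nlinarith [hm, h2]

/-- expansion estimates for ⟨v'⟩^k. -/
theorem stmt3 (k : ℝ) (hk : 4 ≤ k) :
    ∃ C : ℝ, 0 < C ∧ ∀ (v w : E3) (σ : S2),
      (|jap (vP v w σ) ^ k - sinHalf v w σ ^ k * jap w ^ k| ≤
          C * sinHalf v w σ ^ 2 * jap w ^ (k - 1) * jap v + C * jap v ^ k) ∧
      (|jap (vP v w σ) ^ k - cosHalf v w σ ^ k * jap v ^ k| ≤
          C * jap w ^ k * jap v ^ (k - 1)) := by
  have hk1 : (1:ℝ) ≤ k := by linarith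
  have hk0 : (0:ℝ) < k := by linarith
  have hC : (0:ℝ) < k * 6 ^ k :=
    mul_pos hk0 (Real.rpow_pos_of_pos (by norm_num) k)
  refine ⟨k * 6 ^ k, hC, ?_⟩
  intro v w σ
  -- notation
  set a := jap v with ha
  set b := jap w with hb
  set s := sinHalf v w σ with hs
  set c := cosHalf v w σ with hc
  set x := jap (vP v w σ) with hx
  set d := ‖v - w‖ with hd
  have ha1 : 1 ≤ a := one_le_jap' v
  have hb1 : 1 ≤ b := one_le_jap' w
  have ha0 : 0 < a := jap_pos' v
  have hb0 : 0 < b := jap_pos' w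
  have hx0 : 0 < x := jap_pos' (vP v w σ)
  have hnv : ‖v‖ ≤ a := norm_le_jap' v
  have hnw : ‖w‖ ≤ b := norm_le_jap' w
  have hnx : ‖vP v w σ‖ ≤ x := norm_le_jap' (vP v w σ)
  have hax : x ≤ 1 + ‖vP v w σ‖ := jap_le_one_add' (vP v w σ)
  have hs0 : 0 ≤ s := sinHalf_nonneg' v w σ
  have hs1 : s ≤ 1 := sinHalf_le_one' v w σ
  have hc0 : 0 ≤ c := cosHalf_nonneg' v w σ
  have hc1 : c ≤ 1 := cosHalf_le_one' v w σ
  have hdv : ‖vP v w σ - v‖ = s * d := norm_vP_sub_v v w σ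
  have hdw : ‖vP v w σ - w‖ = c * d := norm_vP_sub_w v w σ
  have hd1 : d ≤ ‖v‖ + ‖w‖ := norm_sub_le v w
  have hd0 : 0 ≤ d := norm_nonneg _
  have hnv0 : 0 ≤ ‖v‖ := norm_nonneg v
  have hnw0 : 0 ≤ ‖w‖ := norm_nonneg w
  -- 6^k = 6 * 6^(k-1), and coefficient bounds
  have h6k : (6:ℝ) ^ k = 6 ^ (k - 1) * 6 := by
    have h := Real.rpow_add_one (by norm_num : (6:ℝ) ≠ 0) (k - 1)
    rw [sub_add_cancel] at h
    exact h
  have h26 : (2:ℝ) ^ (k - 1) ≤ 6 ^ (k - 1) :=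
    Real.rpow_le_rpow (by norm_num) (by norm_num) (by linarith)
  have h46 : (4:ℝ) ^ (k - 1) ≤ 6 ^ (k - 1) :=
    Real.rpow_le_rpow (by norm_num) (by norm_num) (by linarith)
  have h6pos : (0:ℝ) < 6 ^ (k - 1) := Real.rpow_pos_of_pos (by norm_num) _
  have h23 : (2:ℝ) ^ (k - 1) * 3 ^ (k - 1) = 6 ^ (k - 1) := by
    rw [← Real.mul_rpow (by norm_num) (by norm_num)]; norm_num
  constructor
  · -- part (i)
    have hxu : x ≤ s * b + 3 * a := by
      have t1 : ‖vP v w σ‖ ≤ ‖v‖ + s * d := by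
        calc ‖vP v w σ‖ = ‖v + (vP v w σ - v)‖ := by congr 1; abel
          _ ≤ ‖v‖ + ‖vP v w σ - v‖ := norm_add_le _ _
          _ = ‖v‖ + s * d := by rw [hdv]
      have t2 : s * d ≤ s * ‖v‖ + s * ‖w‖ := by
        calc s * d ≤ s * (‖v‖ + ‖w‖) := mul_le_mul_of_nonneg_left hd1 hs0
          _ = s * ‖v‖ + s * ‖w‖ := mul_add _ _ _
      have t3 : s * ‖v‖ ≤ ‖v‖ := by
        have := mul_le_mul_of_nonneg_right hs1 hnv0
        simpa using this
      have t4 : s * ‖w‖ ≤ s * b := mul_le_mul_of_nonneg_left hnw hs0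
      linarith
    have hxl : s * b ≤ x + 3 * a := by
      have g1 : s * b ≤ s + s * ‖w‖ := by
        calc s * b ≤ s * (1 + ‖w‖) :=
              mul_le_mul_of_nonneg_left (jap_le_one_add' w) hs0
          _ = s + s * ‖w‖ := by ring
      have g2 : ‖w‖ ≤ d + ‖v‖ := by
        calc ‖w‖ = ‖v - (v - w)‖ := by congr 1; abel
          _ ≤ ‖v‖ + ‖v - w‖ := norm_sub_le _ _
          _ = d + ‖v‖ := by ring
      have g3 : s * ‖w‖ ≤ s * d + s * ‖v‖ := by
        calc s * ‖w‖ ≤ s * (d + ‖v‖) := mul_le_mul_of_nonneg_left g2 hs0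
          _ = s * d + s * ‖v‖ := mul_add _ _ _
      have g4 : s * d ≤ x + ‖v‖ := by
        calc s * d = ‖vP v w σ - v‖ := hdv.symm
          _ ≤ ‖vP v w σ‖ + ‖v‖ := norm_sub_le _ _
          _ ≤ x + ‖v‖ := by linarith
      have g5 : s * ‖v‖ ≤ ‖v‖ := by
        have := mul_le_mul_of_nonneg_right hs1 hnv0
        simpa using this
      linarith
    set M := s * b + 3 * a with hM
    have hM0 : 0 ≤ M := by positivity
    have hsb0 : 0 ≤ s * b := by positivity
    have hyM : s * b ≤ M := by
      have : 0 ≤ 3 * a := by positivity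
      linarith
    have habs : |x ^ k - (s * b) ^ k| ≤ k * M ^ (k - 1) * |x - s * b| :=
      abs_rpow_sub_rpow hk1 hx0.le hsb0 hxu hyM
    have hdiff : |x - s * b| ≤ 3 * a := abs_le.2 ⟨by linarith, by linarith⟩
    have hMk : M ^ (k - 1) ≤ 2 ^ (k - 1) * ((s * b) ^ (k - 1) + (3 * a) ^ (k - 1)) :=
      add_rpow_le_two_rpow hsb0 (by positivity) (by linarith)
    have hsplit : (s * b) ^ (k - 1) = s ^ (k - 1) * b ^ (k - 1) :=
      Real.mul_rpow hs0 hb0.le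
    have hsk : s ^ (k - 1) ≤ s ^ 2 := by
      rcases eq_or_lt_of_le hs0 with h0 | h0
      · rw [← h0, Real.zero_rpow (sub_ne_zero.mpr (ne_of_gt (by linarith : (1:ℝ) < k)))]
        positivity
      · have h := Real.rpow_le_rpow_of_exponent_ge h0 hs1 (by linarith : (2:ℝ) ≤ k - 1)
        rwa [show ((2:ℝ)) = ((2:ℕ):ℝ) by norm_num, Real.rpow_natCast] at h
    have h3a : (3 * a) ^ (k - 1) = 3 ^ (k - 1) * a ^ (k - 1) :=
      Real.mul_rpow (by norm_num) ha0.le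
    have hak : a ^ (k - 1) * a = a ^ k := by
      have h := Real.rpow_add_one (ne_of_gt ha0) (k - 1)
      rw [sub_add_cancel] at h
      rw [h]
    have hgoal : |x ^ k - s ^ k * b ^ k| = |x ^ k - (s * b) ^ k| := by
      rw [Real.mul_rpow hs0 hb0.le]
    rw [hgoal]
    have hbk0 : 0 ≤ b ^ (k - 1) := Real.rpow_nonneg hb0.le _
    have hak0 : 0 ≤ a ^ (k - 1) := Real.rpow_nonneg ha0.le _
    have h2k0 : 0 ≤ (2:ℝ) ^ (k - 1) := Real.rpow_nonneg (by norm_num) _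
    have h3k0 : 0 ≤ (3:ℝ) ^ (k - 1) := Real.rpow_nonneg (by norm_num) _
    calc |x ^ k - (s * b) ^ k| ≤ k * M ^ (k - 1) * |x - s * b| := habs
      _ ≤ k * M ^ (k - 1) * (3 * a) := by
          have hMk0 : 0 ≤ M ^ (k - 1) := Real.rpow_nonneg hM0 _
          have hkM : 0 ≤ k * M ^ (k - 1) := by positivity
          exact mul_le_mul_of_nonneg_left hdiff hkM
      _ ≤ k * (2 ^ (k - 1) * ((s * b) ^ (k - 1) + (3 * a) ^ (k - 1))) * (3 * a) := by
          have h3a0 : (0:ℝ) ≤ 3 * a := by positivity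
          have hstep := mul_le_mul_of_nonneg_left hMk hk0.le
          exact mul_le_mul_of_nonneg_right hstep h3a0
      _ = k * 2 ^ (k - 1) * 3 * ((s * b) ^ (k - 1) * a) +
          k * 2 ^ (k - 1) * 3 * ((3 * a) ^ (k - 1) * a) := by ring
      _ ≤ k * 2 ^ (k - 1) * 3 * (s ^ 2 * b ^ (k - 1) * a) +
          k * 2 ^ (k - 1) * 3 * (3 ^ (k - 1) * (a ^ (k - 1) * a)) := by
          have hA : (s * b) ^ (k - 1) * a ≤ s ^ 2 * b ^ (k - 1) * a := by
            rw [hsplit]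
            have hmul : s ^ (k - 1) * b ^ (k - 1) ≤ s ^ 2 * b ^ (k - 1) :=
              mul_le_mul_of_nonneg_right hsk hbk0
            exact mul_le_mul_of_nonneg_right hmul ha0.le
          have hB : (3 * a) ^ (k - 1) * a = 3 ^ (k - 1) * (a ^ (k - 1) * a) := by
            rw [h3a]; ring
          have hco : 0 ≤ k * 2 ^ (k - 1) * 3 := by positivity
          have := mul_le_mul_of_nonneg_left hA hco
          rw [hB]
          linarith
      _ = (3 * 2 ^ (k - 1)) * k * (s ^ 2 * b ^ (k - 1) * a) +
          (3 * (2 ^ (k - 1) * 3 ^ (k - 1))) * k * a ^ k := by rw [hak]; ring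
      _ ≤ (6 ^ k) * k * (s ^ 2 * b ^ (k - 1) * a) + (6 ^ k) * k * a ^ k := by
          have c1 : 3 * (2:ℝ) ^ (k - 1) ≤ 6 ^ k := by
            rw [h6k]; linarith
          have c2 : 3 * ((2:ℝ) ^ (k - 1) * 3 ^ (k - 1)) ≤ 6 ^ k := by
            rw [h23, h6k]; linarith
          have hq1 : 0 ≤ s ^ 2 * b ^ (k - 1) * a := by positivity
          have hq2 : 0 ≤ a ^ k := Real.rpow_nonneg ha0.le _
          have e1 := mul_le_mul_of_nonneg_right
            (mul_le_mul_of_nonneg_right c1 hk0.le) hq1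
          have e2 := mul_le_mul_of_nonneg_right
            (mul_le_mul_of_nonneg_right c2 hk0.le) hq2
          linarith
      _ = k * 6 ^ k * s ^ 2 * b ^ (k - 1) * a + k * 6 ^ k * a ^ k := by ring
  · -- part (ii)
    have hxu : x ≤ c * a + 3 * b := by
      have t1 : ‖vP v w σ‖ ≤ ‖w‖ + c * d := by
        calc ‖vP v w σ‖ = ‖w + (vP v w σ - w)‖ := by congr 1; abel
          _ ≤ ‖w‖ + ‖vP v w σ - w‖ := norm_add_le _ _
          _ = ‖w‖ + c * d := by rw [hdw]
      have t2 : c * d ≤ c * ‖v‖ + c * ‖w‖ := by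
        calc c * d ≤ c * (‖v‖ + ‖w‖) := mul_le_mul_of_nonneg_left hd1 hc0
          _ = c * ‖v‖ + c * ‖w‖ := mul_add _ _ _
      have t3 : c * ‖w‖ ≤ ‖w‖ := by
        have := mul_le_mul_of_nonneg_right hc1 hnw0
        simpa using this
      have t4 : c * ‖v‖ ≤ c * a := mul_le_mul_of_nonneg_left hnv hc0
      linarith
    have hxl : c * a ≤ x + 3 * b := by
      have g1 : c * a ≤ c + c * ‖v‖ := by
        calc c * a ≤ c * (1 + ‖v‖) :=
              mul_le_mul_of_nonneg_left (jap_le_one_add' v) hc0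
          _ = c + c * ‖v‖ := by ring
      have g2 : ‖v‖ ≤ d + ‖w‖ := by
        calc ‖v‖ = ‖(v - w) + w‖ := by congr 1; abel
          _ ≤ ‖v - w‖ + ‖w‖ := norm_add_le _ _
          _ = d + ‖w‖ := by ring
      have g3 : c * ‖v‖ ≤ c * d + c * ‖w‖ := by
        calc c * ‖v‖ ≤ c * (d + ‖w‖) := mul_le_mul_of_nonneg_left g2 hc0
          _ = c * d + c * ‖w‖ := mul_add _ _ _
      have g4 : c * d ≤ x + ‖w‖ := by
        calc c * d = ‖vP v w σ - w‖ := hdw.symm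
          _ ≤ ‖vP v w σ‖ + ‖w‖ := norm_sub_le _ _
          _ ≤ x + ‖w‖ := by linarith
      have g5 : c * ‖w‖ ≤ ‖w‖ := by
        have := mul_le_mul_of_nonneg_right hc1 hnw0
        simpa using this
      linarith
    have hca0 : 0 ≤ c * a := by positivity
    set M := 4 * (a * b) with hM
    have hM0 : 0 ≤ M := by positivity
    have hab : a ≤ a * b := le_mul_of_one_le_right ha0.le hb1
    have hba : b ≤ a * b := le_mul_of_one_le_left hb0.le ha1
    have hca : c * a ≤ a := by
      have := mul_le_mul_of_nonneg_right hc1 ha0.le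
      simpa using this
    have hxM : x ≤ M := by
      rw [hM]; linarith
    have hyM : c * a ≤ M := by
      rw [hM]
      have hab0 : 0 ≤ a * b := by positivity
      linarith
    have habs : |x ^ k - (c * a) ^ k| ≤ k * M ^ (k - 1) * |x - c * a| :=
      abs_rpow_sub_rpow hk1 hx0.le hca0 hxM hyM
    have hdiff : |x - c * a| ≤ 3 * b := abs_le.2 ⟨by linarith, by linarith⟩
    have hMk : M ^ (k - 1) = 4 ^ (k - 1) * (a ^ (k - 1) * b ^ (k - 1)) := by
      rw [Real.mul_rpow (by norm_num) (by positivity),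
        Real.mul_rpow ha0.le hb0.le]
    have hbk : b ^ (k - 1) * b = b ^ k := by
      have h := Real.rpow_add_one (ne_of_gt hb0) (k - 1)
      rw [sub_add_cancel] at h
      rw [h]
    have hgoal : |x ^ k - c ^ k * a ^ k| = |x ^ k - (c * a) ^ k| := by
      rw [Real.mul_rpow hc0 ha0.le]
    rw [hgoal]
    have hak0 : 0 ≤ a ^ (k - 1) := Real.rpow_nonneg ha0.le _
    have hbk0 : 0 ≤ b ^ (k - 1) := Real.rpow_nonneg hb0.le _
    have hbk0' : 0 ≤ b ^ k := Real.rpow_nonneg hb0.le _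
    calc |x ^ k - (c * a) ^ k| ≤ k * M ^ (k - 1) * |x - c * a| := habs
      _ ≤ k * M ^ (k - 1) * (3 * b) := by
          have hMk0 : 0 ≤ M ^ (k - 1) := Real.rpow_nonneg hM0 _
          have hkM : 0 ≤ k * M ^ (k - 1) := by positivity
          exact mul_le_mul_of_nonneg_left hdiff hkM
      _ = (3 * 4 ^ (k - 1)) * k * ((b ^ (k - 1) * b) * a ^ (k - 1)) := by
          rw [hMk]; ring
      _ = (3 * 4 ^ (k - 1)) * k * (b ^ k * a ^ (k - 1)) := by rw [hbk]
      _ ≤ (6 ^ k) * k * (b ^ k * a ^ (k - 1)) := by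
          have c1 : 3 * (4:ℝ) ^ (k - 1) ≤ 6 ^ k := by
            rw [h6k]; linarith
          have hq : 0 ≤ b ^ k * a ^ (k - 1) := by positivity
          exact mul_le_mul_of_nonneg_right
            (mul_le_mul_of_nonneg_right c1 hk0.le) hq
      _ = k * 6 ^ k * b ^ k * a ^ (k - 1) := by ring


end
end

section
/- Let γ > −3 and set l := max{γ+2, 3/2}. There exists a constant C > 0 (depending only on γ) such that for all measurable g, f : ℝ³ → ℝ, ∫_{ℝ³}∫_{ℝ³} |v−v*|^γ |g(v*)| |f(v)| dv* dv ≤ C ‖g‖_{L²_l} ‖f‖_{L²_l} (inequality in [0,∞]). -/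
open MeasureTheory Real
open scoped ENNReal RealInnerProductSpace Classical

noncomputable section

/-- squared weighted L² norm in ℝ≥0∞ (possibly infinite) -/
def wSq (q : ℝ) (f : E3 → ℝ) : ℝ≥0∞ := ∫⁻ v : E3, ENNReal.ofReal (f v ^ 2 * jap v ^ (2 * q))

section BilinearAux
open Set

lemma finite_jap' (s : ℝ) (hs : 2*s < -3) :
    (∫⁻ v : E3, ENNReal.ofReal ((1 + ‖v‖ ^ 2) ^ s)) < ∞ := by
  have h3 : (Module.finrank ℝ E3 : ℝ) < -(2*s) := by
    rw [finrank_euclideanSpace_fin]; push_cast; linarith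
  have h := (integrable_rpow_neg_one_add_norm_sq (E := E3) (μ := volume) h3).lintegral_lt_top
  simpa [neg_neg, show 2*s/2 = s by ring] using h

lemma lint_shift (h : E3 → ℝ≥0∞) (w : E3) : (∫⁻ v : E3, h (v - w)) = ∫⁻ v : E3, h v := by
  simpa [sub_eq_add_neg] using lintegral_add_right_eq_self h (-w)

lemma far_ptwise (s : ℝ) (hs : s ≤ 0) (u : E3) :
    (if 1 < ‖u‖ then ‖u‖ ^ s else 0) ≤ (2:ℝ) ^ (-s/2) * (1 + ‖u‖ ^ 2) ^ (s/2) := by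
  split_ifs with h1
  · have ht : (0:ℝ) ≤ ‖u‖ := norm_nonneg u
    have h3 : ‖u‖ ^ s = (‖u‖ ^ 2 : ℝ) ^ (s/2) := by
      rw [← Real.rpow_natCast ‖u‖ 2, ← Real.rpow_mul ht]; ring_nf
    have hx2 : (1 + ‖u‖^2)/2 ≤ ‖u‖^2 := by nlinarith
    have h4 : (‖u‖ ^ 2 : ℝ) ^ (s/2) ≤ ((1 + ‖u‖^2)/2) ^ (s/2) :=
      Real.rpow_le_rpow_of_nonpos (by positivity) hx2 (by linarith)
    have h5 : ((1 + ‖u‖^2)/2 : ℝ) ^ (s/2) = 2 ^ (-s/2) * (1 + ‖u‖^2) ^ (s/2) := by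
      rw [Real.div_rpow (by positivity) (by norm_num), show -s/2 = -(s/2) by ring,
        Real.rpow_neg (by norm_num)]
      ring
    rw [h3]; rw [h5] at h4; exact h4
  · positivity

lemma finite_far (s : ℝ) (hs : s < -3) :
    (∫⁻ u : E3, ENNReal.ofReal (if 1 < ‖u‖ then ‖u‖ ^ s else 0)) < ∞ := by
  have hb : ∀ u : E3, ENNReal.ofReal (if 1 < ‖u‖ then ‖u‖ ^ s else 0) ≤
      ENNReal.ofReal ((2:ℝ) ^ (-s/2)) * ENNReal.ofReal ((1 + ‖u‖ ^ 2) ^ (s/2)) := by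
    intro u
    rw [← ENNReal.ofReal_mul (by positivity)]
    exact ENNReal.ofReal_le_ofReal (far_ptwise s (by linarith) u)
  calc (∫⁻ u : E3, ENNReal.ofReal (if 1 < ‖u‖ then ‖u‖ ^ s else 0))
      ≤ ∫⁻ u : E3, ENNReal.ofReal ((2:ℝ) ^ (-s/2)) * ENNReal.ofReal ((1 + ‖u‖ ^ 2) ^ (s/2)) :=
        lintegral_mono hb
    _ = ENNReal.ofReal ((2:ℝ) ^ (-s/2)) * ∫⁻ u : E3, ENNReal.ofReal ((1 + ‖u‖ ^ 2) ^ (s/2)) :=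
        lintegral_const_mul' _ _ ENNReal.ofReal_ne_top
    _ < ∞ := ENNReal.mul_lt_top ENNReal.ofReal_lt_top (finite_jap' (s/2) (by linarith))

lemma finite_near (γ : ℝ) (hγ : -3 < γ) :
    (∫⁻ u : E3, ENNReal.ofReal (if ‖u‖ ≤ 1 then ‖u‖ ^ γ else 0)) < ∞ := by
  rcases le_or_gt 0 γ with h0 | h0
  · have hb : ∀ u : E3, ENNReal.ofReal (if ‖u‖ ≤ 1 then ‖u‖ ^ γ else 0) ≤
        (Metric.closedBall (0:E3) 1).indicator (fun _ => (1:ℝ≥0∞)) u := by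
      intro u
      split_ifs with h1
      · rw [Set.indicator_of_mem (by simpa [Metric.mem_closedBall] using h1)]
        exact ENNReal.ofReal_le_one.mpr (Real.rpow_le_one (norm_nonneg u) h1 h0)
      · simp
    calc (∫⁻ u : E3, ENNReal.ofReal (if ‖u‖ ≤ 1 then ‖u‖ ^ γ else 0))
        ≤ ∫⁻ u : E3, (Metric.closedBall (0:E3) 1).indicator (fun _ => (1:ℝ≥0∞)) u :=
          lintegral_mono hb
      _ = volume (Metric.closedBall (0:E3) 1) := by
          exact lintegral_indicator_one (measurableSet_closedBall (x := (0:E3)) (ε := 1))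
      _ < ∞ := measure_closedBall_lt_top
  · -- layer cake
    set f : E3 → ℝ := fun u => if ‖u‖ ≤ 1 then ‖u‖ ^ γ else 0 with hf_def
    have h_nn : ∀ u, 0 ≤ f u := by
      intro u; rw [hf_def]; dsimp only; split_ifs
      · exact Real.rpow_nonneg (norm_nonneg u) γ
      · exact le_refl 0
    have h_meas : Measurable f := by
      rw [hf_def]
      exact Measurable.ite (measurableSet_le measurable_norm measurable_const)
        (by fun_prop) measurable_const
    have key : (∫⁻ u : E3, ENNReal.ofReal (f u)) < ∞ := by
      rw [lintegral_eq_lintegral_meas_le volume (Filter.Eventually.of_forall h_nn) h_meas.aemeasurable]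
      have hγne : γ ≠ 0 := h0.ne
      have hsub : ∀ t ∈ Ioi (0:ℝ), volume {a : E3 | t ≤ f a} ≤
          ENNReal.ofReal ((min 1 (t ^ (1/γ))) ^ 3) * volume (Metric.closedBall (0:E3) 1) := by
        intro t ht
        have ht0 : (0:ℝ) < t := ht
        have hss : {a : E3 | t ≤ f a} ⊆ Metric.closedBall 0 (min 1 (t ^ (1/γ))) := by
          intro a ha
          simp only [Set.mem_setOf_eq, hf_def] at ha
          by_cases h1 : ‖a‖ ≤ 1
          · rw [if_pos h1] at ha
            have hna : 0 < ‖a‖ := by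
              rcases eq_or_lt_of_le (norm_nonneg a) with h | h
              · exfalso; rw [← h, Real.zero_rpow hγne] at ha; linarith
              · exact h
            have h2 : (‖a‖ ^ γ) ^ (1/γ) ≤ t ^ (1/γ) :=
              Real.rpow_le_rpow_of_nonpos ht0 ha (by
                rw [one_div]
                exact inv_nonpos.mpr h0.le)
            rw [← Real.rpow_mul (norm_nonneg a), mul_one_div_cancel hγne, Real.rpow_one] at h2
            rw [Metric.mem_closedBall, dist_zero_right]
            exact le_min h1 h2
          · rw [if_neg h1] at ha; linarith
        calc volume {a : E3 | t ≤ f a} ≤ volume (Metric.closedBall 0 (min 1 (t ^ (1/γ)))) :=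
              measure_mono hss
          _ = ENNReal.ofReal ((min 1 (t ^ (1/γ))) ^ Module.finrank ℝ E3) *
                volume (Metric.closedBall (0:E3) 1) := by
              rw [Measure.addHaar_closedBall' volume 0
                (le_min zero_le_one (Real.rpow_nonneg ht0.le _))]
          _ = _ := by rw [finrank_euclideanSpace_fin]
      calc (∫⁻ t in Ioi (0:ℝ), volume {a : E3 | t ≤ f a})
          ≤ ∫⁻ t in Ioi (0:ℝ),
              ENNReal.ofReal ((min 1 (t ^ (1/γ))) ^ 3) * volume (Metric.closedBall (0:E3) 1) :=
            setLIntegral_mono' measurableSet_Ioi hsub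
        _ = (∫⁻ t in Ioi (0:ℝ), ENNReal.ofReal ((min 1 (t ^ (1/γ))) ^ 3)) *
              volume (Metric.closedBall (0:E3) 1) :=
            lintegral_mul_const' _ _ measure_closedBall_lt_top.ne
        _ < ∞ := by
            refine ENNReal.mul_lt_top ?_ measure_closedBall_lt_top
            have hsplit : (∫⁻ t in Ioi (0:ℝ), ENNReal.ofReal ((min 1 (t ^ (1/γ))) ^ 3)) ≤
                (∫⁻ t in Ioc (0:ℝ) 1, ENNReal.ofReal ((min 1 (t ^ (1/γ))) ^ 3)) +
                ∫⁻ t in Ioi (1:ℝ), ENNReal.ofReal ((min 1 (t ^ (1/γ))) ^ 3) :=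
              le_trans (lintegral_mono_set Ioi_subset_Ioc_union_Ioi) (lintegral_union_le _ _ _)
            refine lt_of_le_of_lt hsplit (ENNReal.add_lt_top.2 ⟨?_, ?_⟩)
            · calc (∫⁻ t in Ioc (0:ℝ) 1, ENNReal.ofReal ((min 1 (t ^ (1/γ))) ^ 3))
                  ≤ ∫⁻ _ in Ioc (0:ℝ) 1, 1 := by
                    refine setLIntegral_mono' measurableSet_Ioc fun t ht => ?_
                    refine ENNReal.ofReal_le_one.mpr (pow_le_one₀ ?_ (min_le_left _ _))
                    exact le_min zero_le_one (Real.rpow_nonneg ht.1.le _)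
                _ < ∞ := by
                    rw [setLIntegral_const]
                    exact ENNReal.mul_lt_top (by norm_num) (by simp [Real.volume_Ioc])
            · have hmono : ∀ t ∈ Ioi (1:ℝ), ENNReal.ofReal ((min 1 (t ^ (1/γ))) ^ 3) ≤
                  ENNReal.ofReal (t ^ ((3:ℝ)/γ)) := by
                intro t ht
                have ht1 : (1:ℝ) < t := ht
                have ht0 : (0:ℝ) < t := lt_trans one_pos ht1
                refine ENNReal.ofReal_le_ofReal ?_
                have h1 : (min 1 (t ^ (1/γ))) ^ 3 ≤ (t ^ (1/γ)) ^ 3 :=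
                  pow_le_pow_left₀ (le_min zero_le_one (Real.rpow_nonneg ht0.le _))
                    (min_le_right _ _) 3
                have h2 : ((t : ℝ) ^ (1/γ)) ^ 3 = t ^ ((3:ℝ)/γ) := by
                  rw [← Real.rpow_natCast (t ^ (1/γ)) 3, ← Real.rpow_mul ht0.le]
                  norm_num
                  rw [show γ⁻¹ * 3 = 3/γ by ring]
                rw [h2] at h1; exact h1
              calc (∫⁻ t in Ioi (1:ℝ), ENNReal.ofReal ((min 1 (t ^ (1/γ))) ^ 3))
                  ≤ ∫⁻ t in Ioi (1:ℝ), ENNReal.ofReal (t ^ ((3:ℝ)/γ)) :=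
                    setLIntegral_mono' measurableSet_Ioi hmono
                _ < ∞ := by
                    refine IntegrableOn.setLIntegral_lt_top ?_
                    refine integrableOn_Ioi_rpow_of_lt ?_ one_pos
                    rw [div_lt_iff_of_neg h0]
                    linarith
    exact key

lemma be_schur (l : ℝ) (hl : 0 ≤ l) (k : E3 → ℝ) (hk : Measurable k)
    (hknn : ∀ u, 0 ≤ k u) (hke : ∀ u, k (-u) = k u)
    {A : ℝ} (hA0 : 0 < A)
    (hA : ∀ w : E3, (∫⁻ v : E3, ENNReal.ofReal (k (v - w) * (1 + ‖v‖ ^ 2) ^ (-l)))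
      ≤ ENNReal.ofReal A)
    (f g : E3 → ℝ) (hf : Measurable f) (hg : Measurable g) :
    (∫⁻ v : E3, ∫⁻ w : E3, ENNReal.ofReal (k (v - w) * |g w| * |f v|)) ≤
      ENNReal.ofReal A *
        (∫⁻ w : E3, ENNReal.ofReal (g w ^ 2 * (1 + ‖w‖ ^ 2) ^ l)) ^ ((1:ℝ)/2) *
        (∫⁻ v : E3, ENNReal.ofReal (f v ^ 2 * (1 + ‖v‖ ^ 2) ^ l)) ^ ((1:ℝ)/2) := by
  have hWpos : ∀ (v : E3), (0:ℝ) < 1 + ‖v‖ ^ 2 := fun v => by positivity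
  set μ2 := (volume : Measure E3).prod (volume : Measure E3) with hμ2
  set a : E3 × E3 → ℝ≥0∞ := fun p =>
    ENNReal.ofReal (Real.sqrt (k (p.1 - p.2)) *
      (|g p.2| * ((1 + ‖p.2‖ ^ 2) ^ (l/2) * (1 + ‖p.1‖ ^ 2) ^ (-(l/2))))) with ha_def
  set b : E3 × E3 → ℝ≥0∞ := fun p =>
    ENNReal.ofReal (Real.sqrt (k (p.1 - p.2)) *
      (|f p.1| * ((1 + ‖p.1‖ ^ 2) ^ (l/2) * (1 + ‖p.2‖ ^ 2) ^ (-(l/2))))) with hb_def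
  have hsub : Measurable fun p : E3 × E3 => p.1 - p.2 := measurable_fst.sub measurable_snd
  have hks : Measurable fun p : E3 × E3 => Real.sqrt (k (p.1 - p.2)) := (hk.comp hsub).sqrt
  have hw : ∀ c : ℝ, Measurable fun v : E3 => (1 + ‖v‖ ^ 2 : ℝ) ^ c := fun c => by fun_prop
  have ham : Measurable a := by
    apply Measurable.ennreal_ofReal
    exact hks.mul (((hg.comp measurable_snd).abs).mul
      (((hw (l/2)).comp measurable_snd).mul ((hw (-(l/2))).comp measurable_fst)))
  have hbm : Measurable b := by
    apply Measurable.ennreal_ofReal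
    exact hks.mul (((hf.comp measurable_fst).abs).mul
      (((hw (l/2)).comp measurable_fst).mul ((hw (-(l/2))).comp measurable_snd)))
  have hWmul : ∀ (c : ℝ) (v : E3), (1 + ‖v‖ ^ 2 : ℝ) ^ c * (1 + ‖v‖ ^ 2) ^ (-c) = 1 := by
    intro c v
    rw [← Real.rpow_add (hWpos v)]
    simp
  -- pointwise product identity
  have hab : ∀ p : E3 × E3, a p * b p = ENNReal.ofReal (k (p.1 - p.2) * |g p.2| * |f p.1|) := by
    intro p
    rw [ha_def, hb_def]
    dsimp only
    rw [← ENNReal.ofReal_mul (by positivity)]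
    congr 1
    have h1 : Real.sqrt (k (p.1 - p.2)) * Real.sqrt (k (p.1 - p.2)) = k (p.1 - p.2) :=
      Real.mul_self_sqrt (hknn _)
    calc (Real.sqrt (k (p.1 - p.2)) *
          (|g p.2| * ((1 + ‖p.2‖ ^ 2) ^ (l/2) * (1 + ‖p.1‖ ^ 2) ^ (-(l/2))))) *
        (Real.sqrt (k (p.1 - p.2)) *
          (|f p.1| * ((1 + ‖p.1‖ ^ 2) ^ (l/2) * (1 + ‖p.2‖ ^ 2) ^ (-(l/2)))))
        = (Real.sqrt (k (p.1 - p.2)) * Real.sqrt (k (p.1 - p.2))) *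
          (((1 + ‖p.1‖ ^ 2) ^ (l/2) * (1 + ‖p.1‖ ^ 2) ^ (-(l/2))) *
           (((1 + ‖p.2‖ ^ 2) ^ (l/2) * (1 + ‖p.2‖ ^ 2) ^ (-(l/2))) * (|g p.2| * |f p.1|))) := by
          ring
      _ = k (p.1 - p.2) * |g p.2| * |f p.1| := by
          rw [h1, hWmul, hWmul]; ring
  -- squares
  have hWsq : ∀ (c : ℝ) (v : E3), ((1 + ‖v‖ ^ 2 : ℝ) ^ c) ^ 2 = (1 + ‖v‖ ^ 2) ^ (c * 2) := by
    intro c v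
    rw [← Real.rpow_natCast ((1 + ‖v‖ ^ 2) ^ c) 2, ← Real.rpow_mul (hWpos v).le]
    norm_num
  have haSq : ∀ p : E3 × E3, a p ^ (2:ℝ) =
      ENNReal.ofReal (g p.2 ^ 2 * (1 + ‖p.2‖ ^ 2) ^ l) *
        ENNReal.ofReal (k (p.1 - p.2) * (1 + ‖p.1‖ ^ 2) ^ (-l)) := by
    intro p
    rw [ha_def]
    dsimp only
    rw [ENNReal.ofReal_rpow_of_nonneg (by positivity) (by norm_num : (0:ℝ) ≤ 2),
      ← ENNReal.ofReal_mul (by positivity)]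
    congr 1
    rw [Real.rpow_two, mul_pow, mul_pow, mul_pow, Real.sq_sqrt (hknn _), sq_abs,
      hWsq, hWsq]
    rw [show l/2*2 = l by ring, show -(l/2)*2 = -l by ring]
    ring
  have hbSq : ∀ p : E3 × E3, b p ^ (2:ℝ) =
      ENNReal.ofReal (f p.1 ^ 2 * (1 + ‖p.1‖ ^ 2) ^ l) *
        ENNReal.ofReal (k (p.1 - p.2) * (1 + ‖p.2‖ ^ 2) ^ (-l)) := by
    intro p
    rw [hb_def]
    dsimp only
    rw [ENNReal.ofReal_rpow_of_nonneg (by positivity) (by norm_num : (0:ℝ) ≤ 2),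
      ← ENNReal.ofReal_mul (by positivity)]
    congr 1
    rw [Real.rpow_two, mul_pow, mul_pow, mul_pow, Real.sq_sqrt (hknn _), sq_abs,
      hWsq, hWsq]
    rw [show l/2*2 = l by ring, show -(l/2)*2 = -l by ring]
    ring
  -- identify LHS with product integral
  have hm0 : Measurable fun p : E3 × E3 => ENNReal.ofReal (k (p.1 - p.2) * |g p.2| * |f p.1|) := by
    apply Measurable.ennreal_ofReal
    exact ((hk.comp hsub).mul ((hg.comp measurable_snd).abs)).mul ((hf.comp measurable_fst).abs)
  have hIeq : (∫⁻ v : E3, ∫⁻ w : E3, ENNReal.ofReal (k (v - w) * |g w| * |f v|)) =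
      ∫⁻ p, (a * b) p ∂μ2 := by
    rw [show (a * b) = fun p : E3 × E3 => ENNReal.ofReal (k (p.1 - p.2) * |g p.2| * |f p.1|) from
      funext fun p => hab p]
    rw [lintegral_prod _ hm0.aemeasurable]
  -- Hölder
  have hpq : Real.HolderConjugate 2 2 := Real.HolderConjugate.two_two
  have hmain := ENNReal.lintegral_mul_le_Lp_mul_Lq μ2 hpq ham.aemeasurable hbm.aemeasurable
  -- bound ∫ a^2
  set Gq := (∫⁻ w : E3, ENNReal.ofReal (g w ^ 2 * (1 + ‖w‖ ^ 2) ^ l)) with hGq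
  set Fq := (∫⁻ v : E3, ENNReal.ofReal (f v ^ 2 * (1 + ‖v‖ ^ 2) ^ l)) with hFq
  have hA2 : (∫⁻ p, a p ^ (2:ℝ) ∂μ2) ≤ ENNReal.ofReal A * Gq := by
    have hmeas2 : AEMeasurable (fun p : E3 × E3 => a p ^ (2:ℝ)) μ2 :=
      (ham.pow_const _).aemeasurable
    rw [lintegral_prod_symm _ hmeas2]
    calc (∫⁻ w : E3, ∫⁻ v : E3, a (v, w) ^ (2:ℝ))
        = ∫⁻ w : E3, ENNReal.ofReal (g w ^ 2 * (1 + ‖w‖ ^ 2) ^ l) *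
            ∫⁻ v : E3, ENNReal.ofReal (k (v - w) * (1 + ‖v‖ ^ 2) ^ (-l)) := by
          congr 1; funext w
          rw [← lintegral_const_mul' _ _ ENNReal.ofReal_ne_top]
          congr 1; funext v
          exact haSq (v, w)
      _ ≤ ∫⁻ w : E3, ENNReal.ofReal (g w ^ 2 * (1 + ‖w‖ ^ 2) ^ l) * ENNReal.ofReal A := by
          refine lintegral_mono fun w => ?_
          exact mul_le_mul_right (hA w) _
      _ = ENNReal.ofReal A * Gq := by
          rw [lintegral_mul_const' _ _ ENNReal.ofReal_ne_top, mul_comm]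
  have hB2 : (∫⁻ p, b p ^ (2:ℝ) ∂μ2) ≤ ENNReal.ofReal A * Fq := by
    have hmeas2 : AEMeasurable (fun p : E3 × E3 => b p ^ (2:ℝ)) μ2 :=
      (hbm.pow_const _).aemeasurable
    rw [lintegral_prod _ hmeas2]
    calc (∫⁻ v : E3, ∫⁻ w : E3, b (v, w) ^ (2:ℝ))
        = ∫⁻ v : E3, ENNReal.ofReal (f v ^ 2 * (1 + ‖v‖ ^ 2) ^ l) *
            ∫⁻ w : E3, ENNReal.ofReal (k (w - v) * (1 + ‖w‖ ^ 2) ^ (-l)) := by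
          congr 1; funext v
          rw [← lintegral_const_mul' _ _ ENNReal.ofReal_ne_top]
          congr 1; funext w
          rw [hbSq (v, w)]
          rw [show k (v - w) = k (w - v) by rw [← hke (w - v), neg_sub]]
      _ ≤ ∫⁻ v : E3, ENNReal.ofReal (f v ^ 2 * (1 + ‖v‖ ^ 2) ^ l) * ENNReal.ofReal A := by
          refine lintegral_mono fun v => ?_
          exact mul_le_mul_right (hA v) _
      _ = ENNReal.ofReal A * Fq := by
          rw [lintegral_mul_const' _ _ ENNReal.ofReal_ne_top, mul_comm]
  -- conclude
  have h12 : (0:ℝ) ≤ 1/2 := by norm_num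
  calc (∫⁻ v : E3, ∫⁻ w : E3, ENNReal.ofReal (k (v - w) * |g w| * |f v|))
      = ∫⁻ p, (a * b) p ∂μ2 := hIeq
    _ ≤ (∫⁻ p, a p ^ (2:ℝ) ∂μ2) ^ ((1:ℝ)/2) * (∫⁻ p, b p ^ (2:ℝ) ∂μ2) ^ ((1:ℝ)/2) := by
        simpa using hmain
    _ ≤ (ENNReal.ofReal A * Gq) ^ ((1:ℝ)/2) * (ENNReal.ofReal A * Fq) ^ ((1:ℝ)/2) :=
        mul_le_mul' (ENNReal.rpow_le_rpow hA2 h12) (ENNReal.rpow_le_rpow hB2 h12)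
    _ = ENNReal.ofReal A * Gq ^ ((1:ℝ)/2) * Fq ^ ((1:ℝ)/2) := by
        rw [ENNReal.mul_rpow_of_nonneg _ _ h12, ENNReal.mul_rpow_of_nonneg _ _ h12]
        have hAne : ENNReal.ofReal A ≠ 0 := (ENNReal.ofReal_pos.mpr hA0).ne'
        have : ENNReal.ofReal A ^ ((1:ℝ)/2) * ENNReal.ofReal A ^ ((1:ℝ)/2) =
            ENNReal.ofReal A := by
          rw [← ENNReal.rpow_add _ _ hAne ENNReal.ofReal_ne_top]
          norm_num
        calc ENNReal.ofReal A ^ ((1:ℝ)/2) * Gq ^ ((1:ℝ)/2) *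
              (ENNReal.ofReal A ^ ((1:ℝ)/2) * Fq ^ ((1:ℝ)/2))
            = (ENNReal.ofReal A ^ ((1:ℝ)/2) * ENNReal.ofReal A ^ ((1:ℝ)/2)) *
              Gq ^ ((1:ℝ)/2) * Fq ^ ((1:ℝ)/2) := by ring
          _ = _ := by rw [this]

lemma Wsq (c : ℝ) (v : E3) : ((1 + ‖v‖ ^ 2 : ℝ) ^ c) ^ 2 = (1 + ‖v‖ ^ 2) ^ (c * 2) := by
  rw [← Real.rpow_natCast ((1 + ‖v‖ ^ 2) ^ c) 2, ← Real.rpow_mul (by positivity)]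
  norm_num

lemma neg_ptwise (γ l : ℝ) (hγ : γ < 0) (hl : 0 ≤ l) (t x : ℝ) (ht : 0 ≤ t) (hx : 0 ≤ x) :
    t ^ γ * (1 + x ^ 2) ^ (-l) ≤
      (if t ≤ 1 then t ^ γ else 0) + (2:ℝ) ^ (-γ/2) * (1 + x ^ 2) ^ ((γ - 2*l)/2)
        + (if 1 < t then t ^ (γ - 2*l) else 0) := by
  have hxpos : (0:ℝ) < 1 + x ^ 2 := by positivity
  by_cases h1 : t ≤ 1
  · have hb : t ^ γ * (1 + x ^ 2) ^ (-l) ≤ t ^ γ := by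
      have hw1 : (1 + x ^ 2 : ℝ) ^ (-l) ≤ 1 :=
        Real.rpow_le_one_of_one_le_of_nonpos (by nlinarith) (by linarith)
      calc t ^ γ * (1 + x ^ 2) ^ (-l) ≤ t ^ γ * 1 :=
            mul_le_mul_of_nonneg_left hw1 (Real.rpow_nonneg ht γ)
        _ = t ^ γ := mul_one _
    rw [if_pos h1, if_neg (by linarith)]
    have h2 : (0:ℝ) ≤ (2:ℝ) ^ (-γ/2) * (1 + x ^ 2) ^ ((γ - 2*l)/2) := by positivity
    linarith
  · push_neg at h1
    rw [if_neg (by linarith), if_pos h1]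
    have htpos : (0:ℝ) < t := lt_trans one_pos h1
    by_cases h2 : x ≤ t
    · -- middle term dominates
      have hb : t ^ γ * (1 + x ^ 2) ^ (-l) ≤ (2:ℝ) ^ (-γ/2) * (1 + x ^ 2) ^ ((γ - 2*l)/2) := by
        have ht2 : (1 + x ^ 2)/2 ≤ t ^ 2 := by nlinarith
        have h3 : t ^ γ = (t ^ 2 : ℝ) ^ (γ/2) := by
          rw [← Real.rpow_natCast t 2, ← Real.rpow_mul ht]; push_cast; rw [show (2:ℝ)*(γ/2) = γ by ring]
        have h4 : (t ^ 2 : ℝ) ^ (γ/2) ≤ ((1 + x ^ 2)/2) ^ (γ/2) :=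
          Real.rpow_le_rpow_of_nonpos (by positivity) ht2 (by linarith)
        have h5 : ((1 + x ^ 2)/2 : ℝ) ^ (γ/2) = 2 ^ (-γ/2) * (1 + x ^ 2) ^ (γ/2) := by
          rw [Real.div_rpow hxpos.le (by norm_num), show -γ/2 = -(γ/2) by ring,
            Real.rpow_neg (by norm_num)]
          ring
        have h6 : t ^ γ ≤ 2 ^ (-γ/2) * (1 + x ^ 2) ^ (γ/2) := by
          rw [h3, ← h5]; exact h4
        calc t ^ γ * (1 + x ^ 2) ^ (-l) ≤
            (2 ^ (-γ/2) * (1 + x ^ 2) ^ (γ/2)) * (1 + x ^ 2) ^ (-l) :=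
              mul_le_mul_of_nonneg_right h6 (Real.rpow_nonneg hxpos.le _)
          _ = 2 ^ (-γ/2) * (1 + x ^ 2) ^ ((γ - 2*l)/2) := by
              rw [mul_assoc, ← Real.rpow_add hxpos, show γ/2 + -l = (γ - 2*l)/2 by ring]
      have h7 : (0:ℝ) ≤ t ^ (γ - 2*l) := Real.rpow_nonneg ht _
      have h8 : (0:ℝ) ≤ if t ≤ 1 then t ^ γ else 0 := le_refl _ |>.trans (by
        split_ifs
        · exact Real.rpow_nonneg ht γ
        · exact le_refl 0)
      linarith [hb]
    · push_neg at h2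
      -- last term dominates
      have hb : t ^ γ * (1 + x ^ 2) ^ (-l) ≤ t ^ (γ - 2*l) := by
        have h6 : (1 + x ^ 2 : ℝ) ^ (-l) ≤ (x ^ 2 : ℝ) ^ (-l) :=
          Real.rpow_le_rpow_of_nonpos (by nlinarith) (by nlinarith) (by linarith)
        have h7 : (x ^ 2 : ℝ) ^ (-l) ≤ (t ^ 2 : ℝ) ^ (-l) :=
          Real.rpow_le_rpow_of_nonpos (by positivity) (by nlinarith) (by linarith)
        have h8 : (t ^ 2 : ℝ) ^ (-l) = t ^ (-(2*l)) := by
          rw [← Real.rpow_natCast t 2, ← Real.rpow_mul ht]; push_cast; rw [show (2:ℝ)*(-l) = -(2*l) by ring]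
        calc t ^ γ * (1 + x ^ 2) ^ (-l) ≤ t ^ γ * t ^ (-(2*l)) := by
              refine mul_le_mul_of_nonneg_left ?_ (Real.rpow_nonneg ht γ)
              rw [← h8]; exact h6.trans h7
          _ = t ^ (γ - 2*l) := by
              rw [← Real.rpow_add htpos, show γ + -(2*l) = γ - 2*l by ring]
      have h9 : (0:ℝ) ≤ (2:ℝ) ^ (-γ/2) * (1 + x ^ 2) ^ ((γ - 2*l)/2) := by positivity
      linarith

lemma bil_neg_sup (γ l : ℝ) (hγ : -3 < γ) (hγ0 : γ < 0) (hl : 3/2 ≤ l) :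
    ∃ A : ℝ, 0 < A ∧ ∀ w : E3,
      (∫⁻ v : E3, ENNReal.ofReal (‖v - w‖ ^ γ * (1 + ‖v‖ ^ 2) ^ (-l))) ≤ ENNReal.ofReal A := by
  have hl0 : (0:ℝ) ≤ l := by linarith
  have hgl : γ - 2*l < -3 := by linarith
  set c1 := ∫⁻ u : E3, ENNReal.ofReal (if ‖u‖ ≤ 1 then ‖u‖ ^ γ else 0) with hc1
  set c2 := ENNReal.ofReal ((2:ℝ) ^ (-γ/2)) *
    ∫⁻ v : E3, ENNReal.ofReal ((1 + ‖v‖ ^ 2) ^ ((γ - 2*l)/2)) with hc2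
  set c3 := ∫⁻ u : E3, ENNReal.ofReal (if 1 < ‖u‖ then ‖u‖ ^ (γ - 2*l) else 0) with hc3
  have hc1f : c1 < ∞ := finite_near γ hγ
  have hc2f : c2 < ∞ :=
    ENNReal.mul_lt_top ENNReal.ofReal_lt_top (finite_jap' ((γ - 2*l)/2) (by linarith))
  have hc3f : c3 < ∞ := finite_far (γ - 2*l) hgl
  have hSf : c1 + c2 + c3 < ∞ := by
    exact ENNReal.add_lt_top.2 ⟨ENNReal.add_lt_top.2 ⟨hc1f, hc2f⟩, hc3f⟩
  refine ⟨(c1 + c2 + c3).toReal + 1, by positivity, fun w => ?_⟩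
  have hmeas1 : Measurable fun v : E3 =>
      ENNReal.ofReal (if ‖v - w‖ ≤ 1 then ‖v - w‖ ^ γ else 0) := by
    apply Measurable.ennreal_ofReal
    have hker : Measurable fun u : E3 => (if ‖u‖ ≤ 1 then ‖u‖ ^ γ else 0) :=
      Measurable.ite (measurableSet_le measurable_norm measurable_const)
        (by fun_prop) measurable_const
    exact hker.comp (measurable_id.sub measurable_const)
  have hmeas2 : Measurable fun v : E3 =>
      ENNReal.ofReal ((2:ℝ) ^ (-γ/2) * (1 + ‖v‖ ^ 2) ^ ((γ - 2*l)/2)) := by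
    apply Measurable.ennreal_ofReal; fun_prop
  calc (∫⁻ v : E3, ENNReal.ofReal (‖v - w‖ ^ γ * (1 + ‖v‖ ^ 2) ^ (-l)))
      ≤ ∫⁻ v : E3,
          (ENNReal.ofReal (if ‖v - w‖ ≤ 1 then ‖v - w‖ ^ γ else 0) +
           ENNReal.ofReal ((2:ℝ) ^ (-γ/2) * (1 + ‖v‖ ^ 2) ^ ((γ - 2*l)/2)) +
           ENNReal.ofReal (if 1 < ‖v - w‖ then ‖v - w‖ ^ (γ - 2*l) else 0)) := by
        refine lintegral_mono fun v => ?_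
        have hp := neg_ptwise γ l hγ0 hl0 ‖v - w‖ ‖v‖ (norm_nonneg _) (norm_nonneg _)
        calc ENNReal.ofReal (‖v - w‖ ^ γ * (1 + ‖v‖ ^ 2) ^ (-l))
            ≤ ENNReal.ofReal ((if ‖v - w‖ ≤ 1 then ‖v - w‖ ^ γ else 0) +
                (2:ℝ) ^ (-γ/2) * (1 + ‖v‖ ^ 2) ^ ((γ - 2*l)/2) +
                (if 1 < ‖v - w‖ then ‖v - w‖ ^ (γ - 2*l) else 0)) := ENNReal.ofReal_le_ofReal hp
          _ ≤ _ := le_trans ENNReal.ofReal_add_le (add_le_add_left ENNReal.ofReal_add_le _)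
    _ = (∫⁻ v : E3, ENNReal.ofReal (if ‖v - w‖ ≤ 1 then ‖v - w‖ ^ γ else 0)) +
        (∫⁻ v : E3, ENNReal.ofReal ((2:ℝ) ^ (-γ/2) * (1 + ‖v‖ ^ 2) ^ ((γ - 2*l)/2))) +
        (∫⁻ v : E3, ENNReal.ofReal (if 1 < ‖v - w‖ then ‖v - w‖ ^ (γ - 2*l) else 0)) := by
        rw [lintegral_add_left (f := fun v : E3 => ENNReal.ofReal (if ‖v - w‖ ≤ 1 then ‖v - w‖ ^ γ else 0) +
          ENNReal.ofReal ((2:ℝ) ^ (-γ/2) * (1 + ‖v‖ ^ 2) ^ ((γ - 2*l)/2))) (hmeas1.add hmeas2),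
          lintegral_add_left hmeas1]
    _ = c1 + c2 + c3 := by
        congr 1
        · congr 1
          · exact lint_shift (fun u => ENNReal.ofReal (if ‖u‖ ≤ 1 then ‖u‖ ^ γ else 0)) w
          · rw [hc2]
            rw [← lintegral_const_mul' _ _ ENNReal.ofReal_ne_top]
            congr 1; funext v
            rw [← ENNReal.ofReal_mul (by positivity)]
        · exact lint_shift (fun u => ENNReal.ofReal (if 1 < ‖u‖ then ‖u‖ ^ (γ - 2*l) else 0)) w
    _ ≤ ENNReal.ofReal ((c1 + c2 + c3).toReal + 1) := by
        rw [← ENNReal.ofReal_toReal hSf.ne]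
        exact ENNReal.ofReal_le_ofReal (by simp)

lemma bil_ind_sup (l : ℝ) (hl : 0 ≤ l) :
    ∃ A : ℝ, 0 < A ∧ ∀ w : E3,
      (∫⁻ v : E3, ENNReal.ofReal ((if ‖v - w‖ ≤ 1 then (1:ℝ) else 0) * (1 + ‖v‖ ^ 2) ^ (-l)))
        ≤ ENNReal.ofReal A := by
  have hfin : (∫⁻ u : E3, ENNReal.ofReal (if ‖u‖ ≤ 1 then (1:ℝ) else 0)) < ∞ := by
    have h := finite_near 0 (by norm_num)
    simpa [Real.rpow_zero] using h
  set c := ∫⁻ u : E3, ENNReal.ofReal (if ‖u‖ ≤ 1 then (1:ℝ) else 0) with hc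
  refine ⟨c.toReal + 1, by positivity, fun w => ?_⟩
  calc (∫⁻ v : E3, ENNReal.ofReal ((if ‖v - w‖ ≤ 1 then (1:ℝ) else 0) * (1 + ‖v‖ ^ 2) ^ (-l)))
      ≤ ∫⁻ v : E3, ENNReal.ofReal (if ‖v - w‖ ≤ 1 then (1:ℝ) else 0) := by
        refine lintegral_mono fun v => ENNReal.ofReal_le_ofReal ?_
        have hw1 : (1 + ‖v‖ ^ 2 : ℝ) ^ (-l) ≤ 1 :=
          Real.rpow_le_one_of_one_le_of_nonpos (by nlinarith [sq_nonneg ‖v‖]) (by linarith)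
        have h0 : (0:ℝ) ≤ (if ‖v - w‖ ≤ 1 then (1:ℝ) else 0) := by split_ifs <;> norm_num
        calc (if ‖v - w‖ ≤ 1 then (1:ℝ) else 0) * (1 + ‖v‖ ^ 2) ^ (-l)
            ≤ (if ‖v - w‖ ≤ 1 then (1:ℝ) else 0) * 1 := mul_le_mul_of_nonneg_left hw1 h0
          _ = _ := mul_one _
    _ = c := lint_shift (fun u => ENNReal.ofReal (if ‖u‖ ≤ 1 then (1:ℝ) else 0)) w
    _ ≤ ENNReal.ofReal (c.toReal + 1) := by
        rw [← ENNReal.ofReal_toReal hfin.ne]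
        exact ENNReal.ofReal_le_ofReal (by simp)

lemma bil_single (γ l : ℝ) (f : E3 → ℝ) (hf : Measurable f) :
    (∫⁻ v : E3, ENNReal.ofReal ((1 + ‖v‖ ^ 2) ^ (γ/2) * |f v|)) ≤
      (∫⁻ v : E3, ENNReal.ofReal (f v ^ 2 * (1 + ‖v‖ ^ 2) ^ l)) ^ ((1:ℝ)/2) *
      (∫⁻ v : E3, ENNReal.ofReal ((1 + ‖v‖ ^ 2) ^ (γ - l))) ^ ((1:ℝ)/2) := by
  have hWpos : ∀ (v : E3), (0:ℝ) < 1 + ‖v‖ ^ 2 := fun v => by positivity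
  set a : E3 → ℝ≥0∞ := fun v => ENNReal.ofReal (|f v| * (1 + ‖v‖ ^ 2) ^ (l/2)) with ha
  set b : E3 → ℝ≥0∞ := fun v => ENNReal.ofReal ((1 + ‖v‖ ^ 2) ^ ((γ - l)/2)) with hb
  have ham : Measurable a := by apply Measurable.ennreal_ofReal; fun_prop
  have hbm : Measurable b := by apply Measurable.ennreal_ofReal; fun_prop
  have hab : ∀ v : E3, ENNReal.ofReal ((1 + ‖v‖ ^ 2) ^ (γ/2) * |f v|) = (a * b) v := by
    intro v
    rw [ha, hb]
    dsimp only [Pi.mul_apply]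
    rw [← ENNReal.ofReal_mul (by positivity)]
    congr 1
    rw [mul_assoc, ← Real.rpow_add (hWpos v), show l/2 + (γ - l)/2 = γ/2 by ring]
    ring
  have hpq : Real.HolderConjugate 2 2 := Real.HolderConjugate.two_two
  have hmain := ENNReal.lintegral_mul_le_Lp_mul_Lq volume hpq ham.aemeasurable hbm.aemeasurable
  have haSq : ∀ v : E3, a v ^ (2:ℝ) = ENNReal.ofReal (f v ^ 2 * (1 + ‖v‖ ^ 2) ^ l) := by
    intro v
    rw [ha]
    dsimp only
    rw [ENNReal.ofReal_rpow_of_nonneg (by positivity) (by norm_num : (0:ℝ) ≤ 2)]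
    congr 1
    rw [Real.rpow_two, mul_pow, sq_abs, Wsq, show l/2*2 = l by ring]
  have hbSq : ∀ v : E3, b v ^ (2:ℝ) = ENNReal.ofReal ((1 + ‖v‖ ^ 2) ^ (γ - l)) := by
    intro v
    rw [hb]
    dsimp only
    rw [ENNReal.ofReal_rpow_of_nonneg (by positivity) (by norm_num : (0:ℝ) ≤ 2)]
    congr 1
    rw [Real.rpow_two, Wsq, show (γ - l)/2*2 = γ - l by ring]
  calc (∫⁻ v : E3, ENNReal.ofReal ((1 + ‖v‖ ^ 2) ^ (γ/2) * |f v|))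
      = ∫⁻ v : E3, (a * b) v := by congr 1; funext v; exact hab v
    _ ≤ (∫⁻ v : E3, a v ^ (2:ℝ)) ^ ((1:ℝ)/2) * (∫⁻ v : E3, b v ^ (2:ℝ)) ^ ((1:ℝ)/2) := by
        simpa using hmain
    _ = _ := by
        congr 1
        · congr 1; congr 1; funext v; exact haSq v
        · congr 1; congr 1; funext v; exact hbSq v

end BilinearAux

/-- bilinear estimate ∫∫ |v-v*|^γ |g(v*)| |f(v)| ≤ C ‖g‖_{L²_l} ‖f‖_{L²_l},
with l = max (γ+2) (3/2). -/
theorem stmt4 (γ : ℝ) (hγ : -3 < γ) :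
    ∃ C : ℝ, 0 < C ∧ ∀ f g : E3 → ℝ, Measurable f → Measurable g →
      (∫⁻ v : E3, ∫⁻ w : E3, ENNReal.ofReal (‖v - w‖ ^ γ * |g w| * |f v|)) ≤
        ENNReal.ofReal C * (wSq (max (γ + 2) (3 / 2)) g) ^ ((1 : ℝ) / 2) *
          (wSq (max (γ + 2) (3 / 2)) f) ^ ((1 : ℝ) / 2) := by
  have hjap : ∀ (q : ℝ) (f : E3 → ℝ), wSq q f
      = ∫⁻ v : E3, ENNReal.ofReal (f v ^ 2 * (1 + ‖v‖ ^ 2) ^ q) := by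
    intro q f
    unfold wSq
    congr 1; funext v
    have h : jap v ^ (2 * q) = (1 + ‖v‖ ^ 2) ^ q := by
      rw [jap, Real.sqrt_eq_rpow, ← Real.rpow_mul (by positivity),
        show 1/2 * (2 * q) = q by ring]
    rw [h]
  set l : ℝ := max (γ + 2) (3 / 2) with hldef
  have hl32 : (3/2 : ℝ) ≤ l := le_max_right _ _
  have hl0 : (0:ℝ) ≤ l := by linarith
  rcases lt_or_ge γ 0 with h0γ | h0γ
  · -- singular case: one Schur bound for the whole kernel
    obtain ⟨A, hA0, hA⟩ := bil_neg_sup γ l hγ h0γ hl32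
    refine ⟨A, hA0, fun f g hf hg => ?_⟩
    rw [hjap, hjap]
    exact be_schur l hl0 (fun u => ‖u‖ ^ γ) (by fun_prop)
      (fun u => Real.rpow_nonneg (norm_nonneg u) γ) (fun u => by simp [norm_neg]) hA0 hA f g hf hg
  · -- γ ≥ 0 : split kernel into near part and product part
    have hlγ : γ + 2 ≤ l := le_max_left _ _
    obtain ⟨A₁, hA₁0, hA₁⟩ := bil_ind_sup l hl0
    have hJb : (∫⁻ v : E3, ENNReal.ofReal ((1 + ‖v‖ ^ 2) ^ (γ - l))) < ∞ :=
      finite_jap' (γ - l) (by linarith)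
    set B : ℝ := (∫⁻ v : E3, ENNReal.ofReal ((1 + ‖v‖ ^ 2) ^ (γ - l))).toReal + 1 with hBdef
    have hB0 : 0 < B := by positivity
    have hJbB : (∫⁻ v : E3, ENNReal.ofReal ((1 + ‖v‖ ^ 2) ^ (γ - l))) ≤ ENNReal.ofReal B := by
      rw [hBdef, ← ENNReal.ofReal_toReal hJb.ne]
      exact ENNReal.ofReal_le_ofReal (by simp)
    refine ⟨A₁ + B, by positivity, fun f g hf hg => ?_⟩
    rw [hjap, hjap]
    set G := ∫⁻ w : E3, ENNReal.ofReal (g w ^ 2 * (1 + ‖w‖ ^ 2) ^ l) with hG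
    set F := ∫⁻ v : E3, ENNReal.ofReal (f v ^ 2 * (1 + ‖v‖ ^ 2) ^ l) with hF
    -- pointwise split of the kernel
    have hsplit : ∀ v w : E3, ENNReal.ofReal (‖v - w‖ ^ γ * |g w| * |f v|) ≤
        ENNReal.ofReal ((if ‖v - w‖ ≤ 1 then (1:ℝ) else 0) * |g w| * |f v|) +
        ENNReal.ofReal (((1 + ‖v‖ ^ 2) ^ (γ/2) * |f v|) * ((1 + ‖w‖ ^ 2) ^ (γ/2) * |g w|)) := by
      intro v w
      by_cases h1 : ‖v - w‖ ≤ 1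
      · refine le_trans ?_ le_self_add
        refine ENNReal.ofReal_le_ofReal ?_
        rw [if_pos h1]
        have hle1 : ‖v - w‖ ^ γ ≤ 1 := Real.rpow_le_one (norm_nonneg _) h1 h0γ
        have hgf : (0:ℝ) ≤ |g w| * |f v| := by positivity
        calc ‖v - w‖ ^ γ * |g w| * |f v| = ‖v - w‖ ^ γ * (|g w| * |f v|) := by ring
          _ ≤ 1 * (|g w| * |f v|) := mul_le_mul_of_nonneg_right hle1 hgf
          _ = 1 * |g w| * |f v| := by ring
      · refine le_trans ?_ le_add_self
        refine ENNReal.ofReal_le_ofReal ?_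
        have hle : ‖v - w‖ ^ γ ≤ (1 + ‖v‖ ^ 2) ^ (γ/2) * (1 + ‖w‖ ^ 2) ^ (γ/2) := by
          have h2 : ‖v - w‖ ^ 2 ≤ (1 + ‖v‖ ^ 2) * (1 + ‖w‖ ^ 2) := by
            have h3 := norm_sub_le v w
            nlinarith [sq_nonneg (1 - ‖v‖ * ‖w‖), norm_nonneg v, norm_nonneg w,
              norm_nonneg (v - w)]
          calc ‖v - w‖ ^ γ = (‖v - w‖ ^ 2 : ℝ) ^ (γ/2) := by
                rw [← Real.rpow_natCast ‖v - w‖ 2, ← Real.rpow_mul (norm_nonneg _)]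
                push_cast
                rw [show (2:ℝ) * (γ/2) = γ by ring]
            _ ≤ ((1 + ‖v‖ ^ 2) * (1 + ‖w‖ ^ 2)) ^ (γ/2) :=
                Real.rpow_le_rpow (by positivity) h2 (by linarith)
            _ = (1 + ‖v‖ ^ 2) ^ (γ/2) * (1 + ‖w‖ ^ 2) ^ (γ/2) :=
                Real.mul_rpow (by positivity) (by positivity)
        calc ‖v - w‖ ^ γ * |g w| * |f v|
            = ‖v - w‖ ^ γ * (|g w| * |f v|) := by ring
          _ ≤ ((1 + ‖v‖ ^ 2) ^ (γ/2) * (1 + ‖w‖ ^ 2) ^ (γ/2)) * (|g w| * |f v|) :=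
              mul_le_mul_of_nonneg_right hle (by positivity)
          _ = ((1 + ‖v‖ ^ 2) ^ (γ/2) * |f v|) * ((1 + ‖w‖ ^ 2) ^ (γ/2) * |g w|) := by ring
    -- the near part, via the Schur bound
    have hterm1 : (∫⁻ v : E3, ∫⁻ w : E3,
        ENNReal.ofReal ((if ‖v - w‖ ≤ 1 then (1:ℝ) else 0) * |g w| * |f v|)) ≤
        ENNReal.ofReal A₁ * G ^ ((1:ℝ)/2) * F ^ ((1:ℝ)/2) := by
      refine be_schur l hl0 (fun u => if ‖u‖ ≤ 1 then (1:ℝ) else 0)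
        (Measurable.ite (measurableSet_le measurable_norm measurable_const)
          measurable_const measurable_const)
        (fun u => by by_cases h : ‖u‖ ≤ 1 <;> simp [h]) (fun u => by simp [norm_neg]) hA₁0 hA₁ f g hf hg
    -- the product part
    have hterm2 : (∫⁻ v : E3, ∫⁻ w : E3,
        ENNReal.ofReal (((1 + ‖v‖ ^ 2) ^ (γ/2) * |f v|) * ((1 + ‖w‖ ^ 2) ^ (γ/2) * |g w|))) ≤
        ENNReal.ofReal B * G ^ ((1:ℝ)/2) * F ^ ((1:ℝ)/2) := by
      have hfm : Measurable fun v : E3 => ENNReal.ofReal ((1 + ‖v‖ ^ 2) ^ (γ/2) * |f v|) := by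
        apply Measurable.ennreal_ofReal
        exact (by fun_prop : Measurable fun v : E3 => (1 + ‖v‖ ^ 2 : ℝ) ^ (γ/2)).mul hf.abs
      have hfact : (∫⁻ v : E3, ∫⁻ w : E3,
          ENNReal.ofReal (((1 + ‖v‖ ^ 2) ^ (γ/2) * |f v|) * ((1 + ‖w‖ ^ 2) ^ (γ/2) * |g w|))) =
          (∫⁻ v : E3, ENNReal.ofReal ((1 + ‖v‖ ^ 2) ^ (γ/2) * |f v|)) *
          (∫⁻ w : E3, ENNReal.ofReal ((1 + ‖w‖ ^ 2) ^ (γ/2) * |g w|)) := by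
        calc (∫⁻ v : E3, ∫⁻ w : E3,
            ENNReal.ofReal (((1 + ‖v‖ ^ 2) ^ (γ/2) * |f v|) * ((1 + ‖w‖ ^ 2) ^ (γ/2) * |g w|)))
            = ∫⁻ v : E3, ENNReal.ofReal ((1 + ‖v‖ ^ 2) ^ (γ/2) * |f v|) *
                ∫⁻ w : E3, ENNReal.ofReal ((1 + ‖w‖ ^ 2) ^ (γ/2) * |g w|) := by
              congr 1; funext v
              rw [← lintegral_const_mul' _ _ ENNReal.ofReal_ne_top]
              congr 1; funext w
              rw [← ENNReal.ofReal_mul (by positivity)]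
          _ = _ := lintegral_mul_const _ hfm
      rw [hfact]
      have hSf := bil_single γ l f hf
      have hSg := bil_single γ l g hg
      have h12 : (0:ℝ) ≤ 1/2 := by norm_num
      have hBB : ENNReal.ofReal B ^ ((1:ℝ)/2) * ENNReal.ofReal B ^ ((1:ℝ)/2) =
          ENNReal.ofReal B := by
        rw [← ENNReal.rpow_add _ _ (ENNReal.ofReal_pos.mpr hB0).ne' ENNReal.ofReal_ne_top]
        norm_num
      calc (∫⁻ v : E3, ENNReal.ofReal ((1 + ‖v‖ ^ 2) ^ (γ/2) * |f v|)) *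
            (∫⁻ w : E3, ENNReal.ofReal ((1 + ‖w‖ ^ 2) ^ (γ/2) * |g w|))
          ≤ (F ^ ((1:ℝ)/2) * ENNReal.ofReal B ^ ((1:ℝ)/2)) *
            (G ^ ((1:ℝ)/2) * ENNReal.ofReal B ^ ((1:ℝ)/2)) := by
            refine mul_le_mul' (hSf.trans ?_) (hSg.trans ?_) <;>
              exact mul_le_mul' (le_refl _) (ENNReal.rpow_le_rpow hJbB h12)
        _ = (ENNReal.ofReal B ^ ((1:ℝ)/2) * ENNReal.ofReal B ^ ((1:ℝ)/2)) *
              G ^ ((1:ℝ)/2) * F ^ ((1:ℝ)/2) := by ring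
        _ = ENNReal.ofReal B * G ^ ((1:ℝ)/2) * F ^ ((1:ℝ)/2) := by rw [hBB]
    -- combine
    have hE1m : ∀ v : E3, Measurable fun w : E3 =>
        ENNReal.ofReal ((if ‖v - w‖ ≤ 1 then (1:ℝ) else 0) * |g w| * |f v|) := by
      intro v
      apply Measurable.ennreal_ofReal
      have hker : Measurable fun w : E3 => (if ‖v - w‖ ≤ 1 then (1:ℝ) else 0) := by
        refine Measurable.ite ?_ measurable_const measurable_const
        exact measurableSet_le (measurable_const.sub measurable_id).norm measurable_const
      exact (hker.mul hg.abs).mul measurable_const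
    have hE1M : Measurable fun v : E3 => ∫⁻ w : E3,
        ENNReal.ofReal ((if ‖v - w‖ ≤ 1 then (1:ℝ) else 0) * |g w| * |f v|) := by
      apply Measurable.lintegral_prod_right (f := fun v w =>
        ENNReal.ofReal ((if ‖v - w‖ ≤ 1 then (1:ℝ) else 0) * |g w| * |f v|))
      apply Measurable.ennreal_ofReal
      have hker : Measurable fun p : E3 × E3 => (if ‖p.1 - p.2‖ ≤ 1 then (1:ℝ) else 0) := by
        refine Measurable.ite ?_ measurable_const measurable_const
        exact measurableSet_le (measurable_fst.sub measurable_snd).norm measurable_const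
      exact (hker.mul ((hg.comp measurable_snd).abs)).mul ((hf.comp measurable_fst).abs)
    calc (∫⁻ v : E3, ∫⁻ w : E3, ENNReal.ofReal (‖v - w‖ ^ γ * |g w| * |f v|))
        ≤ ∫⁻ v : E3, ∫⁻ w : E3,
            (ENNReal.ofReal ((if ‖v - w‖ ≤ 1 then (1:ℝ) else 0) * |g w| * |f v|) +
             ENNReal.ofReal (((1 + ‖v‖ ^ 2) ^ (γ/2) * |f v|) *
               ((1 + ‖w‖ ^ 2) ^ (γ/2) * |g w|))) :=
          lintegral_mono fun v => lintegral_mono fun w => hsplit v w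
      _ = (∫⁻ v : E3, ∫⁻ w : E3,
            ENNReal.ofReal ((if ‖v - w‖ ≤ 1 then (1:ℝ) else 0) * |g w| * |f v|)) +
          (∫⁻ v : E3, ∫⁻ w : E3,
            ENNReal.ofReal (((1 + ‖v‖ ^ 2) ^ (γ/2) * |f v|) *
              ((1 + ‖w‖ ^ 2) ^ (γ/2) * |g w|))) := by
          rw [← lintegral_add_left hE1M]
          congr 1; funext v
          exact lintegral_add_left (hE1m v) _
      _ ≤ ENNReal.ofReal A₁ * G ^ ((1:ℝ)/2) * F ^ ((1:ℝ)/2) +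
            ENNReal.ofReal B * G ^ ((1:ℝ)/2) * F ^ ((1:ℝ)/2) := add_le_add hterm1 hterm2
      _ = ENNReal.ofReal (A₁ + B) * G ^ ((1:ℝ)/2) * F ^ ((1:ℝ)/2) := by
          rw [ENNReal.ofReal_add hA₁0.le hB0.le]
          ring

end
end

section
/- Let k ∈ ℝ, a > 0 and b ∈ (0,2). Then there exists a constant C > 0 (depending only on k, a, b) such that for all v, v', v*' ∈ ℝ³ satisfying |v|² ≤ |v'|² + |v*'|², one has e^{a⟨v⟩^b} ⟨v'⟩^k ⟨v*'⟩^k ≤ C ⟨v⟩^k e^{a⟨v'⟩^b} e^{a⟨v*'⟩^b}. (In particular this applies when v' and v*' are the post-collision velocities associated to a pair (v, v*), since then |v|² + |v*|² = |v'|² + |v*'|².) -/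
open MeasureTheory Real
open scoped ENNReal RealInnerProductSpace Classical

noncomputable section

lemma polyexp (m c b : ℝ) (hb : 0 < b) (hc : 0 < c) :
    ∃ D : ℝ, 0 < D ∧ ∀ s : ℝ, 1 ≤ s → s ^ m ≤ D * Real.exp (c * s ^ b) := by
  set M : ℝ := max m 0 * (2 / b) with hM
  have hM0 : 0 ≤ M := by positivity
  refine ⟨Real.exp (M ^ 2 / (4 * c)), Real.exp_pos _, fun s hs => ?_⟩
  have hs0 : (0 : ℝ) < s := lt_of_lt_of_le one_pos hs
  have h1 : s ^ m ≤ s ^ (max m 0) :=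
    Real.rpow_le_rpow_of_exponent_le hs (le_max_left _ _)
  have hlog : Real.log s ≤ (2 / b) * s ^ (b / 2) := by
    have h2 : Real.log (s ^ (b / 2)) = (b / 2) * Real.log s := Real.log_rpow hs0 _
    have h3 : Real.log (s ^ (b / 2)) ≤ s ^ (b / 2) := Real.log_le_self (by positivity)
    have hb2 : (0 : ℝ) < b / 2 := by positivity
    calc Real.log s = (2 / b) * ((b / 2) * Real.log s) := by field_simp
      _ = (2 / b) * Real.log (s ^ (b / 2)) := by rw [h2]
      _ ≤ (2 / b) * s ^ (b / 2) := by
          apply mul_le_mul_of_nonneg_left h3 (by positivity)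
  have hsq : (s ^ (b / 2)) ^ 2 = s ^ b := by
    rw [← Real.rpow_natCast (s ^ (b / 2)) 2, ← Real.rpow_mul hs0.le]
    norm_num
  have hkey : max m 0 * Real.log s ≤ c * s ^ b + M ^ 2 / (4 * c) := by
    have h4 : max m 0 * Real.log s ≤ M * s ^ (b / 2) := by
      calc max m 0 * Real.log s ≤ max m 0 * ((2 / b) * s ^ (b / 2)) :=
            mul_le_mul_of_nonneg_left hlog (le_max_right m 0)
        _ = M * s ^ (b / 2) := by ring
    have h5 : M * s ^ (b / 2) ≤ c * (s ^ (b / 2)) ^ 2 + M ^ 2 / (4 * c) := by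
      have h6 : M * s ^ (b / 2) - c * (s ^ (b / 2)) ^ 2 ≤ M ^ 2 / (4 * c) := by
        rw [le_div_iff₀ (by positivity : (0:ℝ) < 4 * c)]
        nlinarith [sq_nonneg (2 * c * s ^ (b / 2) - M)]
      linarith
    rw [hsq] at h5
    linarith
  calc s ^ m ≤ s ^ (max m 0) := h1
    _ = Real.exp (max m 0 * Real.log s) := by
        rw [Real.rpow_def_of_pos hs0, mul_comm]
    _ ≤ Real.exp (c * s ^ b + M ^ 2 / (4 * c)) := Real.exp_le_exp.mpr hkey
    _ = Real.exp (M ^ 2 / (4 * c)) * Real.exp (c * s ^ b) := by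
        rw [← Real.exp_add]; ring_nf

lemma keyIneq (b : ℝ) (hb1 : 0 < b) (hb2 : b ≤ 2) (X Y Z : ℝ)
    (hX : 1 ≤ X) (hY : 1 ≤ Y) (hZ : 0 ≤ Z) (hYX : Y ≤ X)
    (h : Z ^ 2 ≤ X ^ 2 + Y ^ 2) : Z ^ b ≤ X ^ b + (b / 2) * Y ^ b := by
  have hX0 : (0:ℝ) < X := lt_of_lt_of_le one_pos hX
  have hY0 : (0:ℝ) < Y := lt_of_lt_of_le one_pos hY
  have sqpow : ∀ w : ℝ, 0 ≤ w → (w ^ 2 : ℝ) ^ (b / 2) = w ^ b := by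
    intro w hw
    rw [← Real.rpow_natCast w 2, ← Real.rpow_mul hw]
    norm_num
    rw [show 2 * (b / 2) = b by ring]
  have step1 : Z ^ b ≤ (X ^ 2 + Y ^ 2) ^ (b / 2) := by
    rw [← sqpow Z hZ]
    exact Real.rpow_le_rpow (sq_nonneg Z) h (by positivity)
  set t : ℝ := 1 + (Y / X) ^ 2 with ht
  have ht0 : (0:ℝ) ≤ t := by positivity
  have hsplit : X ^ 2 + Y ^ 2 = X ^ 2 * t := by rw [ht]; field_simp
  have step2 : (X ^ 2 + Y ^ 2) ^ (b / 2) = X ^ b * t ^ (b / 2) := by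
    rw [hsplit, Real.mul_rpow (sq_nonneg X) ht0, sqpow X hX0.le]
  have hgm : t ^ (b / 2) ≤ (b / 2) * t + (1 - b / 2) := by
    have := Real.geom_mean_le_arith_mean2_weighted (by positivity : (0:ℝ) ≤ b / 2)
      (by linarith : (0:ℝ) ≤ 1 - b / 2) ht0 (zero_le_one) (by ring)
    simpa using this
  have hmono : X ^ b * (Y / X) ^ 2 ≤ Y ^ b := by
    have h1 : X ^ b * (Y / X) ^ 2 = X ^ (b - 2) * Y ^ 2 := by
      rw [div_pow, Real.rpow_sub hX0, ← Real.rpow_natCast X 2]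
      push_cast
      field_simp
    have h2 : X ^ (b - 2) ≤ Y ^ (b - 2) :=
      Real.rpow_le_rpow_of_nonpos hY0 hYX (by linarith)
    have h3 : Y ^ (b - 2) * Y ^ 2 = Y ^ b := by
      rw [← Real.rpow_natCast Y 2, ← Real.rpow_add hY0]
      norm_num
    calc X ^ b * (Y / X) ^ 2 = X ^ (b - 2) * Y ^ 2 := h1
      _ ≤ Y ^ (b - 2) * Y ^ 2 := by nlinarith [sq_nonneg Y]
      _ = Y ^ b := h3
  have hXb0 : (0:ℝ) < X ^ b := Real.rpow_pos_of_pos hX0 b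
  calc Z ^ b ≤ (X ^ 2 + Y ^ 2) ^ (b / 2) := step1
    _ = X ^ b * t ^ (b / 2) := step2
    _ ≤ X ^ b * ((b / 2) * t + (1 - b / 2)) := by
        apply mul_le_mul_of_nonneg_left hgm hXb0.le
    _ = X ^ b + (b / 2) * (X ^ b * (Y / X) ^ 2) := by rw [ht]; ring
    _ ≤ X ^ b + (b / 2) * Y ^ b := by nlinarith

set_option maxHeartbeats 1000000 in
lemma coreIneq (k a b : ℝ) (ha : 0 < a) (hb1 : 0 < b) (hb2 : b < 2) :
    ∃ C : ℝ, 0 < C ∧ ∀ X Y Z : ℝ, 1 ≤ X → 1 ≤ Y → 1 ≤ Z → Z ^ 2 ≤ X ^ 2 + Y ^ 2 →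
      Real.exp (a * Z ^ b) * X ^ k * Y ^ k ≤
        C * Z ^ k * Real.exp (a * X ^ b) * Real.exp (a * Y ^ b) := by
  have hc1 : (0:ℝ) < a * (1 - b / 2) := by nlinarith
  have h2b : (2:ℝ) ^ (-b) < 1 :=
    Real.rpow_lt_one_of_one_lt_of_neg one_lt_two (by linarith)
  have h2b0 : (0:ℝ) < (2:ℝ) ^ (-b) := Real.rpow_pos_of_pos two_pos _
  have hc2 : (0:ℝ) < a * (1 - (2:ℝ) ^ (-b)) := by nlinarith
  obtain ⟨D₁, hD₁, hP₁⟩ := polyexp k (a * (1 - b / 2)) b hb1 hc1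
  obtain ⟨D₂, hD₂, hP₂⟩ := polyexp (2 * k) (a * (1 - (2:ℝ) ^ (-b))) b hb1 hc2
  have hs2 : (0:ℝ) < Real.sqrt 2 := Real.sqrt_pos.mpr two_pos
  have h2k : (0:ℝ) < (2:ℝ) ^ k := Real.rpow_pos_of_pos two_pos k
  have hsk : (0:ℝ) < (Real.sqrt 2) ^ (-k) := Real.rpow_pos_of_pos hs2 _
  set C : ℝ := (2:ℝ) ^ k * D₁ + D₂ + (Real.sqrt 2) ^ (-k) with hCdef
  have hC : 0 < C := by positivity
  refine ⟨C, hC, ?_⟩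
  have sym : ∀ X Y Z : ℝ, 1 ≤ X → 1 ≤ Y → 1 ≤ Z → Y ≤ X → Z ^ 2 ≤ X ^ 2 + Y ^ 2 →
      Real.exp (a * Z ^ b) * X ^ k * Y ^ k ≤
        C * Z ^ k * Real.exp (a * X ^ b) * Real.exp (a * Y ^ b) := by
    intro X Y Z hX hY hZ hYX hZ2
    have hX0 : (0:ℝ) < X := lt_of_lt_of_le one_pos hX
    have hY0 : (0:ℝ) < Y := lt_of_lt_of_le one_pos hY
    have hZ0 : (0:ℝ) < Z := lt_of_lt_of_le one_pos hZ
    have hkey : Z ^ b ≤ X ^ b + (b / 2) * Y ^ b :=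
      keyIneq b hb1 hb2.le X Y Z hX hY hZ0.le hYX hZ2
    have hYb : (0:ℝ) ≤ Y ^ b := Real.rpow_nonneg hY0.le b
    have hXk : (0:ℝ) ≤ X ^ k := Real.rpow_nonneg hX0.le k
    have hYk : (0:ℝ) ≤ Y ^ k := Real.rpow_nonneg hY0.le k
    have hZk0 : (0:ℝ) ≤ Z ^ k := Real.rpow_nonneg hZ0.le k
    rcases le_or_gt k 0 with hk | hk
    · -- k ≤ 0
      have hE : Real.exp (a * Z ^ b) ≤ Real.exp (a * X ^ b) * Real.exp (a * Y ^ b) := by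
        rw [← Real.exp_add]
        apply Real.exp_le_exp.mpr
        have h' : Z ^ b ≤ X ^ b + Y ^ b := by
          nlinarith [mul_nonneg (by linarith : (0:ℝ) ≤ 1 - b / 2) hYb]
        have := mul_le_mul_of_nonneg_left h' ha.le
        linarith
      have hZle : Z ≤ Real.sqrt 2 * (X * Y) := by
        have h1 : Z ^ 2 ≤ 2 * (X * Y) ^ 2 := by
          have e1 : (1:ℝ) ≤ X ^ 2 := by nlinarith
          have e2 : (1:ℝ) ≤ Y ^ 2 := by nlinarith
          nlinarith [mul_le_mul_of_nonneg_left e2 (sq_nonneg X),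
            mul_le_mul_of_nonneg_left e1 (sq_nonneg Y)]
        calc Z = Real.sqrt (Z ^ 2) := (Real.sqrt_sq hZ0.le).symm
          _ ≤ Real.sqrt (2 * (X * Y) ^ 2) := Real.sqrt_le_sqrt h1
          _ = Real.sqrt 2 * Real.sqrt ((X * Y) ^ 2) := Real.sqrt_mul (by norm_num) _
          _ = Real.sqrt 2 * (X * Y) := by rw [Real.sqrt_sq (by positivity)]
      have hxy : X ^ k * Y ^ k ≤ (Real.sqrt 2) ^ (-k) * Z ^ k := by
        have h2 : (Real.sqrt 2 * (X * Y)) ^ k ≤ Z ^ k :=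
          Real.rpow_le_rpow_of_nonpos hZ0 hZle hk
        rw [Real.mul_rpow hs2.le (by positivity), Real.mul_rpow hX0.le hY0.le] at h2
        have h3 := mul_le_mul_of_nonneg_left h2 hsk.le
        rwa [← mul_assoc, ← Real.rpow_add hs2, neg_add_cancel, Real.rpow_zero,
          one_mul] at h3
      have hCs : (Real.sqrt 2) ^ (-k) ≤ C := by
        have : (0:ℝ) < (2:ℝ) ^ k * D₁ := by positivity
        linarith
      calc Real.exp (a * Z ^ b) * X ^ k * Y ^ k
          = Real.exp (a * Z ^ b) * (X ^ k * Y ^ k) := by ring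
        _ ≤ (Real.exp (a * X ^ b) * Real.exp (a * Y ^ b)) *
              ((Real.sqrt 2) ^ (-k) * Z ^ k) :=
            mul_le_mul hE hxy (by positivity) (by positivity)
        _ = (Real.sqrt 2) ^ (-k) * Z ^ k * Real.exp (a * X ^ b) * Real.exp (a * Y ^ b) := by
            ring
        _ ≤ C * Z ^ k * Real.exp (a * X ^ b) * Real.exp (a * Y ^ b) := by gcongr
    · -- k > 0
      have hZk1 : (1:ℝ) ≤ Z ^ k := by
        have := Real.rpow_le_rpow_of_exponent_le hZ hk.le
        rwa [Real.rpow_zero] at this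
      have hEY1 : (1:ℝ) ≤ Real.exp (a * Y ^ b) := by
        have : Real.exp 0 ≤ Real.exp (a * Y ^ b) := Real.exp_le_exp.mpr (by positivity)
        rwa [Real.exp_zero] at this
      rcases le_or_gt X (2 * Z) with hXZ | hXZ
      · -- case A
        have hE : Real.exp (a * Z ^ b) ≤
            Real.exp (a * X ^ b) * Real.exp (a * (b / 2) * Y ^ b) := by
          rw [← Real.exp_add]
          apply Real.exp_le_exp.mpr
          have := mul_le_mul_of_nonneg_left hkey ha.le
          linarith
        have h2 : X ^ k ≤ (2:ℝ) ^ k * Z ^ k := by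
          have h := Real.rpow_le_rpow hX0.le hXZ hk.le
          rwa [Real.mul_rpow (by norm_num) hZ0.le] at h
        have h3 : Y ^ k ≤ D₁ * Real.exp (a * (1 - b / 2) * Y ^ b) := hP₁ Y hY
        have hCA : (2:ℝ) ^ k * D₁ ≤ C := by linarith
        calc Real.exp (a * Z ^ b) * X ^ k * Y ^ k
            ≤ (Real.exp (a * X ^ b) * Real.exp (a * (b / 2) * Y ^ b)) *
                ((2:ℝ) ^ k * Z ^ k) * (D₁ * Real.exp (a * (1 - b / 2) * Y ^ b)) :=
              mul_le_mul (mul_le_mul hE h2 hXk (by positivity)) h3 hYk (by positivity)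
          _ = (2:ℝ) ^ k * D₁ * Z ^ k * Real.exp (a * X ^ b) *
                (Real.exp (a * (b / 2) * Y ^ b) * Real.exp (a * (1 - b / 2) * Y ^ b)) := by
              ring
          _ = (2:ℝ) ^ k * D₁ * Z ^ k * Real.exp (a * X ^ b) * Real.exp (a * Y ^ b) := by
              rw [← Real.exp_add, show a * (b / 2) * Y ^ b + a * (1 - b / 2) * Y ^ b
                = a * Y ^ b by ring]
          _ ≤ C * Z ^ k * Real.exp (a * X ^ b) * Real.exp (a * Y ^ b) := by gcongr
      · -- case B
        have hZX : Z ≤ X / 2 := by linarith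
        have h1 : Z ^ b ≤ (X / 2) ^ b := Real.rpow_le_rpow hZ0.le hZX hb1.le
        have h1' : (X / 2) ^ b = X ^ b * (2:ℝ) ^ (-b) := by
          rw [Real.div_rpow hX0.le (by norm_num), Real.rpow_neg (by norm_num)]
          ring
        have hE : Real.exp (a * Z ^ b) ≤ Real.exp (a * (X ^ b * (2:ℝ) ^ (-b))) := by
          apply Real.exp_le_exp.mpr
          rw [← h1']
          exact mul_le_mul_of_nonneg_left h1 ha.le
        have hYX' : Y ^ k ≤ X ^ k := Real.rpow_le_rpow hY0.le hYX hk.le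
        have hXX : X ^ k * X ^ k = X ^ (2 * k) := by
          rw [← Real.rpow_add hX0, show k + k = 2 * k by ring]
        have h3 : X ^ (2 * k) ≤ D₂ * Real.exp (a * (1 - (2:ℝ) ^ (-b)) * X ^ b) := hP₂ X hX
        have hD2C : D₂ ≤ C := by
          have g1 : (0:ℝ) < (2:ℝ) ^ k * D₁ := by positivity
          linarith
        calc Real.exp (a * Z ^ b) * X ^ k * Y ^ k
            ≤ Real.exp (a * (X ^ b * (2:ℝ) ^ (-b))) * X ^ k * X ^ k :=
              mul_le_mul (mul_le_mul hE le_rfl hXk (Real.exp_pos _).le) hYX' hYk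
                (by positivity)
          _ = Real.exp (a * (X ^ b * (2:ℝ) ^ (-b))) * X ^ (2 * k) := by
              rw [mul_assoc, hXX]
          _ ≤ Real.exp (a * (X ^ b * (2:ℝ) ^ (-b))) *
                (D₂ * Real.exp (a * (1 - (2:ℝ) ^ (-b)) * X ^ b)) :=
              mul_le_mul_of_nonneg_left h3 (Real.exp_pos _).le
          _ = D₂ * Real.exp (a * (X ^ b * (2:ℝ) ^ (-b)) +
                a * (1 - (2:ℝ) ^ (-b)) * X ^ b) := by rw [Real.exp_add]; ring
          _ = D₂ * Real.exp (a * X ^ b) := by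
              rw [show a * (X ^ b * (2:ℝ) ^ (-b)) + a * (1 - (2:ℝ) ^ (-b)) * X ^ b
                = a * X ^ b by ring]
          _ ≤ C * Z ^ k * Real.exp (a * X ^ b) * Real.exp (a * Y ^ b) := by
              have hstep : D₂ ≤ C * Z ^ k * Real.exp (a * Y ^ b) := by
                have t1 : C * 1 ≤ C * Z ^ k := mul_le_mul_of_nonneg_left hZk1 hC.le
                have t2 : C * Z ^ k * 1 ≤ C * Z ^ k * Real.exp (a * Y ^ b) :=
                  mul_le_mul_of_nonneg_left hEY1 (by positivity)
                nlinarith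
              calc D₂ * Real.exp (a * X ^ b)
                  ≤ (C * Z ^ k * Real.exp (a * Y ^ b)) * Real.exp (a * X ^ b) :=
                    mul_le_mul_of_nonneg_right hstep (Real.exp_pos _).le
                _ = C * Z ^ k * Real.exp (a * X ^ b) * Real.exp (a * Y ^ b) := by ring
  intro X Y Z hX hY hZ hZ2
  rcases le_total Y X with h | h
  · exact sym X Y Z hX hY hZ h hZ2
  · have hh := sym Y X Z hY hX hZ h (by linarith)
    calc Real.exp (a * Z ^ b) * X ^ k * Y ^ k
        = Real.exp (a * Z ^ b) * Y ^ k * X ^ k := by ring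
      _ ≤ C * Z ^ k * Real.exp (a * Y ^ b) * Real.exp (a * X ^ b) := hh
      _ = C * Z ^ k * Real.exp (a * X ^ b) * Real.exp (a * Y ^ b) := by ring


/-- exponential weights are quasi-sub-multiplicative along collisions:
e^{a⟨v⟩^b} ⟨v'⟩^k ⟨v*'⟩^k ≤ C ⟨v⟩^k e^{a⟨v'⟩^b} e^{a⟨v*'⟩^b} whenever |v|² ≤ |v'|² + |v*'|². -/
theorem stmt9 (k a b : ℝ) (ha : 0 < a) (hb1 : 0 < b) (hb2 : b < 2) :
    ∃ C : ℝ, 0 < C ∧ ∀ v v' vs' : E3, ‖v‖ ^ 2 ≤ ‖v'‖ ^ 2 + ‖vs'‖ ^ 2 →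
      Real.exp (a * jap v ^ b) * jap v' ^ k * jap vs' ^ k ≤
        C * jap v ^ k * Real.exp (a * jap v' ^ b) * Real.exp (a * jap vs' ^ b) := by
  obtain ⟨C, hC, hmain⟩ := coreIneq k a b ha hb1 hb2
  refine ⟨C, hC, fun v v' vs' h => ?_⟩
  have j1 : ∀ w : E3, 1 ≤ jap w := by
    intro w
    have h1 : Real.sqrt 1 ≤ Real.sqrt (1 + ‖w‖ ^ 2) := Real.sqrt_le_sqrt (le_add_of_nonneg_right (sq_nonneg _))
    simpa [jap] using h1
  have j2 : ∀ w : E3, jap w ^ 2 = 1 + ‖w‖ ^ 2 := fun w => Real.sq_sqrt (by positivity)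
  apply hmain (jap v') (jap vs') (jap v) (j1 v') (j1 vs') (j1 v)
  rw [j2, j2, j2]
  linarith

end
end
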